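/- arXiv:2010.04392 — 2 statements merged into one kernel-verified Lean document; each statement's English description precedes it below -/
import Mathlib

section
/- Let n ≥ 1. For all α ∈ I_1 (i.e. rank α ≤ 1) and all η ∈ P_n, the following two integer identities hold: rank α − rank(αη) = Φ(α̂,η) − Φ(α,η), and rank α − rank(ηα) = Φ(η,α̂) − Φ(η,α). -/
namespace TPM

/-- Vertex set `{1,…,n} ∪ {1',…,n'}`: `Sum.inl` = unprimed (upper row),
`Sum.inr` = primed (lower row). -/
abbrev V (n : ℕ) := Fin n ⊕ Fin n

/-- The partition monoid `P_n`: set partitions of the `2n`-element set `V n`,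
encoded as equivalence relations (setoids). -/
abbrev PM (n : ℕ) := Setoid (V n)

/-- Three-row vertex set of the product graph: top / middle / bottom. -/
abbrev W (n : ℕ) := Fin n ⊕ (Fin n ⊕ Fin n)

variable {n : ℕ}

/-- First factor: unprimed ↦ top, primed ↦ middle. -/
def topMid : V n → W n
  | Sum.inl i => Sum.inl i
  | Sum.inr i => Sum.inr (Sum.inl i)

/-- Second factor: unprimed ↦ middle, primed ↦ bottom. -/
def midBot : V n → W n
  | Sum.inl i => Sum.inr (Sum.inl i)
  | Sum.inr i => Sum.inr (Sum.inr i)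

/-- Embedding of `V n` as top and bottom rows of the three-row set. -/
def topBot : V n → W n
  | Sum.inl i => Sum.inl i
  | Sum.inr i => Sum.inr (Sum.inr i)

/-- Edge relation of the product graph `Γ(α,β)`. -/
def graphRel (α β : PM n) (x y : W n) : Prop :=
  (∃ u v : V n, α.r u v ∧ x = topMid u ∧ y = topMid v) ∨
  (∃ u v : V n, β.r u v ∧ x = midBot u ∧ y = midBot v)

/-- Connectivity (equivalence closure of the edge relation) in `Γ(α,β)`. -/
def conn (α β : PM n) : W n → W n → Prop := Relation.EqvGen (graphRel α β)

/-- Connectivity in `Γ(α,β)`, as a setoid on the three-row vertex set. -/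
def connSetoid (α β : PM n) : Setoid (W n) :=
  ⟨conn α β, Relation.EqvGen.is_equivalence _⟩

/-- The product of two partitions: `x,y` lie in the same block of `αβ` iff they are
connected in `Γ(α,β)`. -/
def pmul (α β : PM n) : PM n :=
  ⟨fun x y => conn α β (topBot x) (topBot y),
    ⟨fun _ => Relation.EqvGen.refl _, fun h => Relation.EqvGen.symm _ _ h, fun h h' => Relation.EqvGen.trans _ _ _ h h'⟩⟩

/-- A vertex of the three-row set lies in the middle row. -/
def isMid (x : W n) : Prop := ∃ i : Fin n, x = Sum.inr (Sum.inl i)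

/-- `Φ(α,β)`: the number of floating components of `Γ(α,β)`, i.e. connected components
all of whose vertices lie in the middle row. -/
noncomputable def Phi (α β : PM n) : ℕ :=
  Nat.card {c : Quotient (connSetoid α β) //
    ∀ x : W n, Quotient.mk (connSetoid α β) x = c → isMid x}

/-- The rank of a partition: the number of transversal blocks (blocks containing both an
unprimed and a primed element). -/
noncomputable def rnk (α : PM n) : ℕ :=
  Nat.card {c : Quotient α //
    (∃ i : Fin n, Quotient.mk α (Sum.inl i) = c) ∧ ∃ i : Fin n, Quotient.mk α (Sum.inr i) = c}

/-- Which row of `V n` a point lies in. -/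
def side : V n → Bool
  | Sum.inl _ => true
  | Sum.inr _ => false

/-- `α̂`: split each transversal of `α` into its unprimed part and its primed part. -/
def hat (α : PM n) : PM n :=
  ⟨fun x y => α.r x y ∧ side x = side y,
    ⟨fun x => ⟨α.iseqv.refl x, rfl⟩,
     fun h => ⟨α.iseqv.symm h.1, h.2.symm⟩,
     fun h h' => ⟨α.iseqv.trans h.1 h'.1, h.2.trans h'.2⟩⟩⟩

/-- The twisted product on `ℕ × P_n`:  `(i,α)(j,β) = (i + j + Φ(α,β), αβ)`. -/
noncomputable def tmul (a b : ℕ × PM n) : ℕ × PM n :=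
  (a.1 + b.1 + Phi a.2 b.2, pmul a.2 b.2)

/-- A congruence on a set equipped with a binary operation: an equivalence relation
compatible with the operation on both sides. -/
def IsCongruence {M : Type*} (mul : M → M → M) (σ : M → M → Prop) : Prop :=
  Equivalence σ ∧ ∀ x y a, σ x y → σ (mul a x) (mul a y) ∧ σ (mul x a) (mul y a)

/-- Green's relation `R`: equality of the right ideals `xM = yM`. -/
def greenR {M : Type*} (mul : M → M → M) (x y : M) : Prop :=
  Set.range (mul x) = Set.range (mul y)

/-- Green's relation `L`: `Mx = My`. -/
def greenL {M : Type*} (mul : M → M → M) (x y : M) : Prop :=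
  Set.range (fun a => mul a x) = Set.range (fun a => mul a y)

/-- The principal two-sided ideal `MxM`. -/
def jSet {M : Type*} (mul : M → M → M) (x : M) : Set M :=
  Set.range (fun p : M × M => mul (mul p.1 x) p.2)

/-- Green's relation `J`: `MxM = MyM`. -/
def greenJ {M : Type*} (mul : M → M → M) (x y : M) : Prop :=
  jSet mul x = jSet mul y

/-- Green's relation `H = R ∩ L`. -/
def greenH {M : Type*} (mul : M → M → M) (x y : M) : Prop :=
  greenR mul x y ∧ greenL mul x y

/-- Green's relation `D = R ∘ L`. -/
def greenD {M : Type*} (mul : M → M → M) (x y : M) : Prop :=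
  ∃ z, greenR mul x z ∧ greenL mul z y

/-- `pd(α,β)` satisfies `P`, where `α` has `p` transversals: there are representatives
`a s` of the upper parts of the `p` (pairwise distinct) transversals of `α`, with `b s`
representing the corresponding lower parts, and a permutation `π` with `P π` such that the
block of `β` containing `a s` contains `b (π s)`.  (For H-related `α, β ∈ D_p` this says
exactly that some representation of the permutational difference `pd(α,β)` satisfies `P`.) -/
def pdIn (p : ℕ) (P : Equiv.Perm (Fin p) → Prop) (α β : PM n) : Prop :=
  ∃ (a b : Fin p → Fin n) (π : Equiv.Perm (Fin p)),
    (∀ s t, α.r (Sum.inl (a s)) (Sum.inl (a t)) → s = t) ∧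
    (∀ s, α.r (Sum.inl (a s)) (Sum.inr (b s))) ∧
    (∀ s, β.r (Sum.inl (a s)) (Sum.inr (b (π s)))) ∧
    P π

/-- The relation `ν_N` on `D_p`, for a subgroup `N ≤ S_p`:  H-related pairs of rank-`p`
partitions whose permutational difference lies in `N`. -/
def nuRel (p : ℕ) (N : Subgroup (Equiv.Perm (Fin p))) (α β : PM n) : Prop :=
  rnk α = p ∧ rnk β = p ∧ greenH pmul α β ∧ pdIn p (· ∈ N) α β

/-- The congruence `(m, m+d)^♯` on the additive monoid `ℕ` (intended for `d ≥ 1`). -/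
def natCong (m d : ℕ) (i j : ℕ) : Prop :=
  i = j ∨ (m ≤ i ∧ m ≤ j ∧ i % d = j % d)

/-- `min θ ≤ i` for a congruence `θ` on `ℕ` (with `min Δ_ℕ = ∞`). -/
def minLE (θ : ℕ → ℕ → Prop) (i : ℕ) : Prop :=
  ∃ a b, θ a b ∧ a ≠ b ∧ a ≤ i

/-- `k ≤ min θ` for a congruence `θ` on `ℕ` (with `min Δ_ℕ = ∞`). -/
def leMin (k : ℕ) (θ : ℕ → ℕ → Prop) : Prop :=
  ∀ a b, θ a b → a ≠ b → k ≤ a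

/-- The possible entries of a C-matrix. -/
inductive CEntry : Type
  | delta | muUp | muDown | mu | lam | rho | R
  | nsym (q : ℕ) (N : Subgroup (Equiv.Perm (Fin q)))

/-- Whether a C-matrix entry is an N-symbol. -/
def isNsym : CEntry → Prop
  | CEntry.nsym _ _ => True
  | _ => False

/-- The allowed values of the symbol `ζ` in row types RT2, RT5, RT6. -/
def isZeta (e : CEntry) : Prop :=
  e = CEntry.mu ∨ e = CEntry.muUp ∨ e = CEntry.muDown ∨ e = CEntry.delta

/-- The allowed values of the symbol `ξ` in row types RT4–RT7: any of `μ,ρ,λ,R` if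
`d = 1`, and only `μ` if `d > 1`. -/
def xiOK (d : ℕ) (e : CEntry) : Prop :=
  e = CEntry.mu ∨ (d = 1 ∧ (e = CEntry.rho ∨ e = CEntry.lam ∨ e = CEntry.R))

/-- Row type RT1 for rows 0 and 1: all entries `Δ`. -/
def RT1 (M0 M1 : ℕ → CEntry) : Prop :=
  (∀ i, M0 i = CEntry.delta) ∧ (∀ i, M1 i = CEntry.delta)

/-- Row type RT2. -/
def RT2 (Θ0 Θ1 : ℕ → ℕ → Prop) (M0 M1 : ℕ → CEntry) : Prop :=
  Θ0 = Eq ∧ Θ1 = Eq ∧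
  ∃ i ζ, isZeta ζ ∧
    (∀ j, j < i → M0 j = CEntry.delta) ∧ (∀ j, i ≤ j → M0 j = CEntry.mu) ∧
    (∀ j, j < i → M1 j = CEntry.delta) ∧ M1 i = ζ ∧ (∀ j, i < j → M1 j = CEntry.mu)

/-- Row type RT3. -/
def RT3 (Θ0 : ℕ → ℕ → Prop) (M0 M1 : ℕ → CEntry) : Prop :=
  ∃ m ξ, Θ0 = natCong m 1 ∧ (ξ = CEntry.rho ∨ ξ = CEntry.lam ∨ ξ = CEntry.R) ∧
    (∀ i, M1 i = CEntry.delta) ∧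
    (∀ j, j < m → M0 j = CEntry.delta) ∧ (∀ j, m ≤ j → M0 j = ξ)

/-- Row type RT4. -/
def RT4 (Θ0 Θ1 : ℕ → ℕ → Prop) (M0 M1 : ℕ → CEntry) : Prop :=
  ∃ m d ξ, 1 ≤ d ∧ Θ0 = natCong m d ∧ Θ1 = natCong m d ∧ xiOK d ξ ∧
    (∀ j, j < m → M0 j = CEntry.delta ∧ M1 j = CEntry.delta) ∧
    (∀ j, m ≤ j → M0 j = ξ ∧ M1 j = ξ)

/-- Row type RT5. -/
def RT5 (Θ0 Θ1 : ℕ → ℕ → Prop) (M0 M1 : ℕ → CEntry) : Prop :=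
  ∃ m d i ξ ζ, 1 ≤ d ∧ i < m ∧ Θ0 = natCong m d ∧ Θ1 = natCong (m + 1) d ∧
    xiOK d ξ ∧ isZeta ζ ∧
    (∀ j, j < i → M0 j = CEntry.delta) ∧ (∀ j, i ≤ j → j < m → M0 j = CEntry.mu) ∧
    (∀ j, m ≤ j → M0 j = ξ) ∧
    (∀ j, j < i → M1 j = CEntry.delta) ∧ M1 i = ζ ∧
    (∀ j, i < j → j ≤ m → M1 j = CEntry.mu) ∧ (∀ j, m < j → M1 j = ξ)

/-- Row type RT6. -/
def RT6 (Θ0 Θ1 : ℕ → ℕ → Prop) (M0 M1 : ℕ → CEntry) : Prop :=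
  ∃ m l d ξ ζ, 1 ≤ d ∧ m < l ∧ Θ0 = natCong m d ∧ Θ1 = natCong l d ∧
    xiOK d ξ ∧ isZeta ζ ∧
    (∀ j, j < m → M0 j = CEntry.delta) ∧ (∀ j, m ≤ j → M0 j = ξ) ∧
    (∀ j, j < l - 1 → M1 j = CEntry.delta) ∧ M1 (l - 1) = ζ ∧ (∀ j, l ≤ j → M1 j = ξ)

/-- Row type RT7. -/
def RT7 (Θ0 Θ1 : ℕ → ℕ → Prop) (M0 M1 : ℕ → CEntry) : Prop :=
  ∃ m l d ξ, 1 ≤ d ∧ 0 < m ∧ m + 1 < l ∧ (l - 1) % d = m % d ∧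
    Θ0 = natCong m d ∧ Θ1 = natCong l d ∧ xiOK d ξ ∧
    (∀ j, j < m - 1 → M0 j = CEntry.delta) ∧ M0 (m - 1) = CEntry.mu ∧
    (∀ j, m ≤ j → M0 j = ξ) ∧
    (∀ j, j < l - 1 → M1 j = CEntry.delta) ∧ M1 (l - 1) = CEntry.mu ∧
    (∀ j, l ≤ j → M1 j = ξ)

/-- Row type RT8 for a row `q ≥ 2`: all entries `Δ`. -/
def RT8 (Mq : ℕ → CEntry) : Prop := ∀ i, Mq i = CEntry.delta

/-- Row type RT9 for a row `q ≥ 2`. -/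
def RT9 (q : ℕ) (Θq : ℕ → ℕ → Prop) (Mq : ℕ → CEntry) : Prop :=
  ∃ (i k : ℕ) (Ns : ℕ → Subgroup (Equiv.Perm (Fin q))),
    i ≤ k ∧ leMin k Θq ∧
    (∀ j, i ≤ j → j ≤ k → Ns j ≠ ⊥ ∧ (Ns j).Normal) ∧
    (∀ j j', i ≤ j → j ≤ j' → j' ≤ k → Ns j ≤ Ns j') ∧
    (∀ j, j < i → Mq j = CEntry.delta) ∧
    (∀ j, i ≤ j → j < k → Mq j = CEntry.nsym q (Ns j)) ∧
    (∀ j, k ≤ j → Mq j = CEntry.nsym q (Ns k))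

/-- Row type RT10 for a row `q ≥ 2`. -/
def RT10 (q : ℕ) (Θq : ℕ → ℕ → Prop) (Mq : ℕ → CEntry) : Prop :=
  ∃ (i m : ℕ) (Ns : ℕ → Subgroup (Equiv.Perm (Fin q))),
    i ≤ m ∧ Θq = natCong m 1 ∧
    (∀ j, i ≤ j → j < m → Ns j ≠ ⊥ ∧ (Ns j).Normal) ∧
    (∀ j j', i ≤ j → j ≤ j' → j' < m → Ns j ≤ Ns j') ∧
    (∀ j, j < i → Mq j = CEntry.delta) ∧
    (∀ j, i ≤ j → j < m → Mq j = CEntry.nsym q (Ns j)) ∧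
    (∀ j, m ≤ j → Mq j = CEntry.R)

/-- A C-pair for `P_n^Φ`: a descending chain `Θ = (θ_0 ⊇ ⋯ ⊇ θ_n)` of congruences on
`(ℕ,+)` together with a matrix `M = (M_{qi})`, `0 ≤ q ≤ n`, `i ∈ ℕ`, whose rows 0 and 1
jointly have one of the types RT1–RT7, whose rows `q ≥ 2` have one of the types RT8–RT10,
and which satisfies the verticality conditions (V1) and (V2). -/
def IsCPair (n : ℕ) (Θ : ℕ → ℕ → ℕ → Prop) (M : ℕ → ℕ → CEntry) : Prop :=
  (∀ q, q ≤ n → IsCongruence (· + ·) (Θ q)) ∧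
  (∀ q r, q ≤ r → r ≤ n → ∀ i j, Θ r i j → Θ q i j) ∧
  (RT1 (M 0) (M 1) ∨ RT2 (Θ 0) (Θ 1) (M 0) (M 1) ∨ RT3 (Θ 0) (M 0) (M 1) ∨
    RT4 (Θ 0) (Θ 1) (M 0) (M 1) ∨ RT5 (Θ 0) (Θ 1) (M 0) (M 1) ∨
    RT6 (Θ 0) (Θ 1) (M 0) (M 1) ∨ RT7 (Θ 0) (Θ 1) (M 0) (M 1)) ∧
  (∀ q, 2 ≤ q → q ≤ n → (RT8 (M q) ∨ RT9 q (Θ q) (M q) ∨ RT10 q (Θ q) (M q))) ∧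
  (∀ q i, 1 ≤ q → q ≤ n → isNsym (M q i) →
    ¬(M (q - 1) i = CEntry.delta ∨ M (q - 1) i = CEntry.muUp ∨
      M (q - 1) i = CEntry.muDown ∨ isNsym (M (q - 1) i))) ∧
  (∀ q i, 2 ≤ q → q ≤ n → M q i = CEntry.R → M (q - 1) i = CEntry.R)

/-- The relation `cg(Θ,M)` on `P_n^Φ` associated with a C-pair `(Θ,M)`: conditions
(C1)–(C8). -/
def cg (n : ℕ) (Θ : ℕ → ℕ → ℕ → Prop) (M : ℕ → ℕ → CEntry)
    (a b : ℕ × PM n) : Prop :=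
  -- (C1)
  (M (rnk a.2) a.1 = CEntry.delta ∧ M (rnk b.2) b.1 = CEntry.delta ∧
    Θ (rnk a.2) a.1 b.1 ∧ a.2 = b.2) ∨
  -- (C2)
  (M (rnk a.2) a.1 = CEntry.R ∧ M (rnk b.2) b.1 = CEntry.R) ∨
  -- (C3)
  (∃ p N, M (rnk a.2) a.1 = CEntry.nsym p N ∧ M (rnk b.2) b.1 = CEntry.nsym p N ∧
    Θ (rnk a.2) a.1 b.1 ∧ rnk a.2 = p ∧ greenH pmul a.2 b.2 ∧ pdIn p (· ∈ N) a.2 b.2) ∨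
  -- (C4)
  (M (rnk a.2) a.1 = CEntry.lam ∧ M (rnk b.2) b.1 = CEntry.lam ∧
    greenL pmul (hat a.2) (hat b.2)) ∨
  -- (C5)
  (M (rnk a.2) a.1 = CEntry.rho ∧ M (rnk b.2) b.1 = CEntry.rho ∧
    greenR pmul (hat a.2) (hat b.2)) ∨
  -- (C6)
  (M (rnk a.2) a.1 = CEntry.muDown ∧ M (rnk b.2) b.1 = CEntry.muDown ∧
    hat a.2 = hat b.2 ∧ greenL pmul a.2 b.2) ∨
  -- (C7)
  (M (rnk a.2) a.1 = CEntry.muUp ∧ M (rnk b.2) b.1 = CEntry.muUp ∧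
    hat a.2 = hat b.2 ∧ greenR pmul a.2 b.2) ∨
  -- (C8)
  (M (rnk a.2) a.1 = CEntry.mu ∧ M (rnk b.2) b.1 = CEntry.mu ∧
    hat a.2 = hat b.2 ∧
    ((rnk a.2 = rnk b.2 ∧ Θ (rnk a.2) a.1 b.1) ∨
     (rnk a.2 ≠ rnk b.2 ∧ Θ 0 (a.1 + rnk b.2) (b.1 + rnk a.2) ∧
        ¬ minLE (Θ (rnk a.2)) a.1 ∧ ¬ minLE (Θ (rnk b.2)) b.1) ∨
     (rnk a.2 ≠ rnk b.2 ∧ Θ 0 (a.1 + rnk b.2) (b.1 + rnk a.2) ∧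
        minLE (Θ (rnk a.2)) a.1 ∧ minLE (Θ (rnk b.2)) b.1)))

/-- The C-pair `(Θ,M)` is exceptional with exceptional row `q`, where
`θ_q = (m, m+2d)^♯`. -/
def ExcAt (n : ℕ) (Θ : ℕ → ℕ → ℕ → Prop) (M : ℕ → ℕ → CEntry) (q m d : ℕ) : Prop :=
  2 ≤ q ∧ q ≤ n ∧ 1 ≤ d ∧ Θ q = natCong m (2 * d) ∧
  ((2 < q ∧ M q m = CEntry.nsym q (alternatingGroup (Fin q))) ∨
   (q = 2 ∧ M 2 m = CEntry.delta ∧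
     (M 1 m = CEntry.mu ∨ M 1 m = CEntry.rho ∨ M 1 m = CEntry.lam ∨ M 1 m = CEntry.R) ∧
     (∀ i j, natCong m d i j → Θ 1 i j)))

/-- The exceptional congruence `cgx(Θ,M)` associated with an exceptional C-pair:
`cg(Θ,M)` together with the pairs of (C9). -/
def cgx (n : ℕ) (Θ : ℕ → ℕ → ℕ → Prop) (M : ℕ → ℕ → CEntry) (q m d : ℕ)
    (a b : ℕ × PM n) : Prop :=
  cg n Θ M a b ∨
  (rnk a.2 = q ∧ rnk b.2 = q ∧ natCong m d a.1 b.1 ∧ ¬ Θ q a.1 b.1 ∧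
    greenH pmul a.2 b.2 ∧ pdIn q (fun π => π ∉ alternatingGroup (Fin q)) a.2 b.2)

/-- The Rees relation of a subset `I`. -/
def rees {M : Type*} (I : Set M) (x y : M) : Prop := x = y ∨ (x ∈ I ∧ y ∈ I)

/-- A (possibly empty) ideal of `P_n^Φ`: `MIM ⊆ I`. -/
def tIdeal (n : ℕ) (I : Set (ℕ × PM n)) : Prop :=
  ∀ a b x, x ∈ I → tmul (tmul a x) b ∈ I

/-- `I(σ)`: the union of all ideals `I` of `P_n^Φ` whose Rees congruence is contained
in `σ`. -/
def Isig (n : ℕ) (σ : (ℕ × PM n) → (ℕ × PM n) → Prop) : Set (ℕ × PM n) :=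
  ⋃₀ {I | tIdeal n I ∧ ∀ x y, rees I x y → σ x y}

/-- The 0-twisted partition monoid `P_{n,0}^Φ`, carried by `Option (P_n)` with
`none` the zero element `✗`. -/
noncomputable def mul0 (a b : Option (PM n)) : Option (PM n) :=
  match a, b with
  | some α, some β => if Phi α β = 0 then some (pmul α β) else none
  | _, _ => none

/-- `rank a ≤ q`, where `rank ✗ = -∞`. -/
def rnkLE (a : Option (PM n)) (q : ℕ) : Prop :=
  ∀ α, a = some α → rnk α ≤ q

/-- The Rees congruence `R_q` on `P_{n,0}^Φ`. -/
def ReesQ (q : ℕ) (a b : Option (PM n)) : Prop :=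
  a = b ∨ (rnkLE a q ∧ rnkLE b q)

/-- Lift a relation on `P_n` to `P_{n,0}^Φ = P_n ∪ {✗}`. -/
def lift2 (r : PM n → PM n → Prop) (a b : Option (PM n)) : Prop :=
  ∃ α β, a = some α ∧ b = some β ∧ r α β

/- ===== auxiliary development for rank_drop ===== -/

section RankDropAux

lemma eqvGen_map' {A B : Type*} {r : A → A → Prop} {r' : B → B → Prop} (f : A → B)
    (hf : ∀ x y, r x y → r' (f x) (f y)) :
    ∀ {x y : A}, Relation.EqvGen r x y → Relation.EqvGen r' (f x) (f y) := by
  intro x y h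
  induction h with
  | rel a b h => exact .rel _ _ (hf _ _ h)
  | refl a => exact .refl _
  | symm a b _ ih => exact .symm _ _ ih
  | trans a b c _ _ ih1 ih2 => exact .trans _ _ _ ih1 ih2

lemma eqvGen_pres {A : Type*} {r : A → A → Prop} (P : A → Prop)
    (hP : ∀ x y, r x y → (P x ↔ P y)) :
    ∀ {x y : A}, Relation.EqvGen r x y → (P x ↔ P y) := by
  intro x y h
  induction h with
  | rel a b h => exact hP _ _ h
  | refl a => exact Iff.rfl
  | symm a b _ ih => exact ih.symm
  | trans a b c _ _ ih1 ih2 => exact ih1.trans ih2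

/-- `x` lies in the top row. -/
def isTop (x : W n) : Prop := ∃ i : Fin n, x = Sum.inl i

lemma isTop_inl (i : Fin n) : isTop (Sum.inl i : W n) := ⟨i, rfl⟩

lemma not_isTop_inr (x : Fin n ⊕ Fin n) : ¬ isTop (Sum.inr x : W n) := by
  rintro ⟨i, h⟩; cases h

lemma isMid_mid (i : Fin n) : isMid (Sum.inr (Sum.inl i) : W n) := ⟨i, rfl⟩

lemma not_isMid_inl (i : Fin n) : ¬ isMid (Sum.inl i : W n) := by
  rintro ⟨j, h⟩; cases h

lemma not_isMid_bot (i : Fin n) : ¬ isMid (Sum.inr (Sum.inr i) : W n) := by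
  rintro ⟨j, h⟩
  simp at h

/-- monotonicity: `Γ(α̂,η)`-connectivity implies `Γ(α,η)`-connectivity. -/
lemma hat_le (α η : PM n) : ∀ {x y : W n}, conn (hat α) η x y → conn α η x y := by
  intro x y h
  exact eqvGen_map' id (fun a b e => by
    rcases e with ⟨u, v, huv, hx, hy⟩ | ⟨u, v, huv, hx, hy⟩
    · exact Or.inl ⟨u, v, And.left huv, hx, hy⟩
    · exact Or.inr ⟨u, v, huv, hx, hy⟩) h

/-- If `β` has no transversal pairs, connectivity in `Γ(β,θ)` preserves `isTop`. -/
lemma graph_top_pres (β θ : PM n) (hnc : ∀ i j : Fin n, ¬ β.r (Sum.inl i) (Sum.inr j)) :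
    ∀ {x y : W n}, conn β θ x y → (isTop x ↔ isTop y) := by
  intro x y h
  refine eqvGen_pres isTop (fun a b e => ?_) h
  rcases e with ⟨u, v, huv, rfl, rfl⟩ | ⟨u, v, huv, rfl, rfl⟩
  · rcases u with i | i <;> rcases v with j | j
    · exact iff_of_true (isTop_inl i) (isTop_inl j)
    · exact absurd huv (hnc i j)
    · exact absurd (β.iseqv.symm huv) (hnc j i)
    · exact iff_of_false (not_isTop_inr _) (not_isTop_inr _)
  · rcases u with i | i <;> rcases v with j | j <;>
      exact iff_of_false (not_isTop_inr _) (not_isTop_inr _)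

lemma hat_no_cross (α : PM n) : ∀ i j : Fin n, ¬ (hat α).r (Sum.inl i) (Sum.inr j) := by
  intro i j h
  have h2 : side (Sum.inl i : V n) = side (Sum.inr j : V n) := And.right h
  simp [side] at h2

lemma rnk_eq_zero_iff (β : PM n) :
    rnk β = 0 ↔ ∀ i j : Fin n, ¬ β.r (Sum.inl i) (Sum.inr j) := by
  constructor
  · intro h i j hij
    have hne : Nonempty {c : Quotient β // (∃ i, Quotient.mk β (Sum.inl i) = c) ∧
        ∃ i, Quotient.mk β (Sum.inr i) = c} :=
      ⟨⟨Quotient.mk β (Sum.inl i), ⟨i, rfl⟩, ⟨j, (Quotient.sound hij).symm⟩⟩⟩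
    have hpos : 0 < rnk β := Nat.card_pos
    omega
  · intro h
    have he : IsEmpty {c : Quotient β // (∃ i, Quotient.mk β (Sum.inl i) = c) ∧
        ∃ i, Quotient.mk β (Sum.inr i) = c} := by
      constructor
      rintro ⟨c, ⟨i, hi⟩, ⟨j, hj⟩⟩
      exact h i j (Quotient.exact (hi.trans hj.symm))
    exact Nat.card_of_isEmpty

lemma hat_eq_self (β : PM n) (hnc : ∀ i j : Fin n, ¬ β.r (Sum.inl i) (Sum.inr j)) :
    hat β = β := by
  apply Setoid.ext
  intro x y
  constructor
  · exact fun h => And.left h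
  · intro h
    refine ⟨h, ?_⟩
    rcases x with i | i <;> rcases y with j | j
    · rfl
    · exact absurd h (hnc i j)
    · exact absurd (β.iseqv.symm h) (hnc j i)
    · rfl

lemma rnk_pmul_zero (β θ : PM n) (hnc : ∀ i j : Fin n, ¬ β.r (Sum.inl i) (Sum.inr j)) :
    rnk (pmul β θ) = 0 := by
  rw [rnk_eq_zero_iff]
  intro i j hij
  have h : conn β θ (Sum.inl i) (Sum.inr (Sum.inr j)) := hij
  exact not_isTop_inr _ ((graph_top_pres β θ hnc h).mp (isTop_inl i))

lemma rank_one_struct (β : PM n) (h : rnk β = 1) :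
    ∃ a0 b0 : Fin n, β.r (Sum.inl a0) (Sum.inr b0) ∧
      ∀ i j : Fin n, β.r (Sum.inl i) (Sum.inr j) → β.r (Sum.inl i) (Sum.inl a0) := by
  unfold rnk at h
  rw [Nat.card_eq_one_iff_unique] at h
  obtain ⟨hs, ⟨⟨c, ⟨a0, ha⟩, ⟨b0, hb⟩⟩⟩⟩ := h
  refine ⟨a0, b0, Quotient.exact (ha.trans hb.symm), ?_⟩
  intro i j hij
  have e := hs.allEq ⟨Quotient.mk β (Sum.inl i), ⟨i, rfl⟩, ⟨j, (Quotient.sound hij).symm⟩⟩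
      ⟨c, ⟨a0, ha⟩, ⟨b0, hb⟩⟩
  have e' : Quotient.mk β (Sum.inl i) = Quotient.mk β (Sum.inl a0) :=
    (congrArg Subtype.val e).trans ha.symm
  exact Quotient.exact e'

end RankDropAux
section RankDropAux2

/-- Characterization of connectivity in `Γ(α,η)` in terms of `Γ(α̂,η)`, when `α` has a
unique transversal with representatives `a0` (top) and `b0` (mid). -/
lemma conn_char (α η : PM n) (a0 b0 : Fin n)
    (hT : α.r (Sum.inl a0) (Sum.inr b0))
    (hU : ∀ i j : Fin n, α.r (Sum.inl i) (Sum.inr j) → α.r (Sum.inl i) (Sum.inl a0))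
    (x y : W n) :
    conn α η x y ↔ (conn (hat α) η x y ∨
      ((conn (hat α) η x (Sum.inl a0) ∨ conn (hat α) η x (Sum.inr (Sum.inl b0))) ∧
       (conn (hat α) η y (Sum.inl a0) ∨ conn (hat α) η y (Sum.inr (Sum.inl b0))))) := by
  have hU2 : ∀ i j : Fin n, α.r (Sum.inl i) (Sum.inr j) → α.r (Sum.inr j) (Sum.inr b0) :=
    fun i j h => α.iseqv.trans (α.iseqv.symm h) (α.iseqv.trans (hU i j h) hT)
  have cross : conn α η (Sum.inl a0) (Sum.inr (Sum.inl b0)) :=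
    Relation.EqvGen.rel _ _ (Or.inl ⟨Sum.inl a0, Sum.inr b0, hT, rfl, rfl⟩)
  constructor
  · intro h
    induction h with
    | rel a b e =>
      rcases e with ⟨u, v, huv, rfl, rfl⟩ | ⟨u, v, huv, rfl, rfl⟩
      · rcases u with i | i
        · rcases v with j | j
          · exact Or.inl (Relation.EqvGen.rel _ _
              (Or.inl ⟨Sum.inl i, Sum.inl j, ⟨huv, rfl⟩, rfl, rfl⟩))
          · exact Or.inr ⟨Or.inl (Relation.EqvGen.rel _ _
                (Or.inl ⟨Sum.inl i, Sum.inl a0, ⟨hU i j huv, rfl⟩, rfl, rfl⟩)),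
              Or.inr (Relation.EqvGen.rel _ _
                (Or.inl ⟨Sum.inr j, Sum.inr b0, ⟨hU2 i j huv, rfl⟩, rfl, rfl⟩))⟩
        · rcases v with j | j
          · have huv' := α.iseqv.symm huv
            exact Or.inr ⟨Or.inr (Relation.EqvGen.rel _ _
                (Or.inl ⟨Sum.inr i, Sum.inr b0, ⟨hU2 j i huv', rfl⟩, rfl, rfl⟩)),
              Or.inl (Relation.EqvGen.rel _ _
                (Or.inl ⟨Sum.inl j, Sum.inl a0, ⟨hU j i huv', rfl⟩, rfl, rfl⟩))⟩
          · exact Or.inl (Relation.EqvGen.rel _ _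
              (Or.inl ⟨Sum.inr i, Sum.inr j, ⟨huv, rfl⟩, rfl, rfl⟩))
      · exact Or.inl (Relation.EqvGen.rel _ _ (Or.inr ⟨u, v, huv, rfl, rfl⟩))
    | refl a => exact Or.inl (Relation.EqvGen.refl _)
    | symm a b _ ih =>
      rcases ih with h | ⟨h1, h2⟩
      · exact Or.inl (Relation.EqvGen.symm _ _ h)
      · exact Or.inr ⟨h2, h1⟩
    | trans a b c _ _ ih1 ih2 =>
      rcases ih1 with h1 | ⟨h1, h1'⟩
      · rcases ih2 with h2 | ⟨h2, h2'⟩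
        · exact Or.inl (Relation.EqvGen.trans _ _ _ h1 h2)
        · refine Or.inr ⟨?_, h2'⟩
          rcases h2 with h2 | h2
          · exact Or.inl (Relation.EqvGen.trans _ _ _ h1 h2)
          · exact Or.inr (Relation.EqvGen.trans _ _ _ h1 h2)
      · rcases ih2 with h2 | ⟨h2, h2'⟩
        · refine Or.inr ⟨h1, ?_⟩
          rcases h1' with h | h
          · exact Or.inl (Relation.EqvGen.trans _ _ _ (Relation.EqvGen.symm _ _ h2) h)
          · exact Or.inr (Relation.EqvGen.trans _ _ _ (Relation.EqvGen.symm _ _ h2) h)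
        · exact Or.inr ⟨h1, h2'⟩
  · intro h
    have toA : ∀ z : W n,
        (conn (hat α) η z (Sum.inl a0) ∨ conn (hat α) η z (Sum.inr (Sum.inl b0))) →
        conn α η z (Sum.inl a0) := by
      intro z hz
      rcases hz with hz | hz
      · exact hat_le α η hz
      · exact Relation.EqvGen.trans _ _ _ (hat_le α η hz) (Relation.EqvGen.symm _ _ cross)
    rcases h with h | ⟨h1, h2⟩
    · exact hat_le α η h
    · exact Relation.EqvGen.trans _ _ _ (toA x h1) (Relation.EqvGen.symm _ _ (toA y h2))

/-- Generic: merging does not change the number of all-`P` classes when nothing happens. -/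
lemma floating_card_eq {A : Type*} (σ τ : Setoid A) (P : A → Prop)
    (hmono : ∀ x y, σ.r x y → τ.r x y)
    (hinj : ∀ x y, τ.r x y → (∀ z, σ.r z x → P z) → σ.r x y) :
    Nat.card {c : Quotient σ // ∀ x, Quotient.mk σ x = c → P x} =
    Nat.card {c : Quotient τ // ∀ x, Quotient.mk τ x = c → P x} := by
  have keyWD : ∀ (c : Quotient σ), (∀ x, Quotient.mk σ x = c → P x) →
      ∀ x, Quotient.mk τ x = Quotient.lift (fun x => Quotient.mk τ x)
        (fun a b h => Quotient.sound (hmono a b h)) c → P x := by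
    intro c hfl x hx
    obtain ⟨y, rfl⟩ := Quotient.exists_rep c
    have hτ : τ.r x y := Quotient.exact hx
    have hσ : σ.r x y := σ.iseqv.symm
      (hinj y x (τ.iseqv.symm hτ) (fun z hz => hfl z (Quotient.sound hz)))
    exact hfl x (Quotient.sound hσ)
  apply Nat.card_congr
  refine Equiv.ofBijective (fun c => ⟨Quotient.lift (fun x => Quotient.mk τ x)
    (fun a b h => Quotient.sound (hmono a b h)) c.1, keyWD c.1 c.2⟩) ⟨?_, ?_⟩
  · rintro ⟨c, hc⟩ ⟨c', hc'⟩ h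
    apply Subtype.ext
    have hG := congrArg Subtype.val h
    obtain ⟨x, rfl⟩ := Quotient.exists_rep c
    obtain ⟨x', rfl⟩ := Quotient.exists_rep c'
    exact Quotient.sound (hinj x x' (Quotient.exact hG) (fun z hz => hc z (Quotient.sound hz)))
  · rintro ⟨c, hc⟩
    obtain ⟨x, rfl⟩ := Quotient.exists_rep c
    exact ⟨⟨Quotient.mk σ x, fun z hz => hc z (Quotient.sound (hmono _ _ (Quotient.exact hz)))⟩,
      Subtype.ext rfl⟩

/-- Generic: merging an all-`P` class `[w]_σ` into a non-all-`P` class loses one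
all-`P` class. -/
lemma floating_card_add_one {A : Type*} [Finite A] (σ τ : Setoid A) (P : A → Prop) (w : A)
    (hmono : ∀ x y, σ.r x y → τ.r x y)
    (hw : ∀ z, σ.r z w → P z)
    (hwnf : ∃ z, τ.r z w ∧ ¬ P z)
    (hinj : ∀ x y, τ.r x y → (∀ z, σ.r z x → P z) → ¬ σ.r x w → σ.r x y) :
    Nat.card {c : Quotient σ // ∀ x, Quotient.mk σ x = c → P x} =
    Nat.card {c : Quotient τ // ∀ x, Quotient.mk τ x = c → P x} + 1 := by
  classical
  set G : Quotient σ → Quotient τ := Quotient.lift (fun x => Quotient.mk τ x)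
    (fun a b h => Quotient.sound (hmono a b h)) with hGdef
  have keyWD : ∀ (c : Quotient σ), c ≠ Quotient.mk σ w → (∀ x, Quotient.mk σ x = c → P x) →
      ∀ x, Quotient.mk τ x = G c → P x := by
    intro c hne hfl x hx
    obtain ⟨y, rfl⟩ := Quotient.exists_rep c
    have hτ : τ.r x y := Quotient.exact hx
    have hσ : σ.r x y := σ.iseqv.symm
      (hinj y x (τ.iseqv.symm hτ) (fun z hz => hfl z (Quotient.sound hz))
        (fun hw' => hne (Quotient.sound hw')))
    exact hfl x (Quotient.sound hσ)
  have Ginj : ∀ c c' : Quotient σ, c ≠ Quotient.mk σ w → (∀ x, Quotient.mk σ x = c → P x) →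
      G c = G c' → c = c' := by
    intro c c' hne hfl hG
    obtain ⟨x, rfl⟩ := Quotient.exists_rep c
    obtain ⟨x', rfl⟩ := Quotient.exists_rep c'
    have hτ : τ.r x x' := Quotient.exact hG
    exact Quotient.sound (hinj x x' hτ (fun z hz => hfl z (Quotient.sound hz))
      (fun hw' => hne (Quotient.sound hw')))
  have hbij : Function.Bijective (fun c : {c : Quotient σ // ∀ x, Quotient.mk σ x = c → P x} =>
      if h : c.1 = Quotient.mk σ w
      then (none : Option {c : Quotient τ // ∀ x, Quotient.mk τ x = c → P x})
      else some ⟨G c.1, keyWD c.1 h c.2⟩) := by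
    constructor
    · rintro ⟨c, hc⟩ ⟨c', hc'⟩ h
      dsimp only at h
      by_cases h1 : c = Quotient.mk σ w <;> by_cases h2 : c' = Quotient.mk σ w
      · exact Subtype.ext (h1.trans h2.symm)
      · rw [dif_pos h1, dif_neg h2] at h; cases h
      · rw [dif_neg h1, dif_pos h2] at h; cases h
      · rw [dif_neg h1, dif_neg h2] at h
        have hG : G c = G c' := congrArg Subtype.val (Option.some.inj h)
        exact Subtype.ext (Ginj c c' h1 hc hG)
    · rintro (_ | ⟨c, hc⟩)
      · refine ⟨⟨Quotient.mk σ w, fun x hx => hw x (Quotient.exact hx)⟩, ?_⟩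
        dsimp only
        rw [dif_pos rfl]
      · obtain ⟨x, rfl⟩ := Quotient.exists_rep c
        have hflσ : ∀ z, Quotient.mk σ z = Quotient.mk σ x → P z :=
          fun z hz => hc z (Quotient.sound (hmono _ _ (Quotient.exact hz)))
        have hne : Quotient.mk σ x ≠ Quotient.mk σ w := by
          intro he
          obtain ⟨z, hz1, hz2⟩ := hwnf
          exact hz2 (hc z (Quotient.sound
            (τ.iseqv.trans hz1 (τ.iseqv.symm (hmono _ _ (Quotient.exact he))))))
        refine ⟨⟨Quotient.mk σ x, hflσ⟩, ?_⟩
        dsimp only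
        rw [dif_neg hne]
        exact congrArg some (Subtype.ext rfl)
  rw [Nat.card_congr (Equiv.ofBijective _ hbij)]
  have fX : Fintype {c : Quotient τ // ∀ x, Quotient.mk τ x = c → P x} := Fintype.ofFinite _
  rw [Nat.card_eq_fintype_card, Nat.card_eq_fintype_card, Fintype.card_option]

end RankDropAux2
section RankDropAux3

/-- The main rank-1 computation. -/
lemma key1 (α η : PM n) (a0 b0 : Fin n)
    (hT : α.r (Sum.inl a0) (Sum.inr b0))
    (hU : ∀ i j : Fin n, α.r (Sum.inl i) (Sum.inr j) → α.r (Sum.inl i) (Sum.inl a0)) :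
    ((Phi (hat α) η : ℤ) - (Phi α η : ℤ) = 1 ∧ rnk (pmul α η) = 0) ∨
    ((Phi (hat α) η : ℤ) - (Phi α η : ℤ) = 0 ∧ rnk (pmul α η) = 1) := by
  have cchar := conn_char α η a0 b0 hT hU
  have topP : ∀ {x y : W n}, conn (hat α) η x y → (isTop x ↔ isTop y) :=
    graph_top_pres (hat α) η (hat_no_cross α)
  have cross : conn α η (Sum.inl a0) (Sum.inr (Sum.inl b0)) :=
    Relation.EqvGen.rel _ _ (Or.inl ⟨Sum.inl a0, Sum.inr b0, hT, rfl, rfl⟩)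
  by_cases hbot : ∃ j : Fin n, conn (hat α) η (Sum.inr (Sum.inl b0)) (Sum.inr (Sum.inr j))
  · -- the merged class reaches the bottom row: Φ's agree, rank of product is 1
    right
    obtain ⟨j0, hj0⟩ := hbot
    have hinjB : ∀ x y : W n, conn α η x y → (∀ z, conn (hat α) η z x → isMid z) →
        conn (hat α) η x y := by
      intro x y hxy hfl
      rcases (cchar x y).mp hxy with h | ⟨h1, h2⟩
      · exact h
      · exfalso
        rcases h1 with h1 | h1
        · exact not_isMid_inl a0 (hfl _ (Relation.EqvGen.symm _ _ h1))
        · exact not_isMid_bot j0 (hfl _ (Relation.EqvGen.trans _ _ _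
            (Relation.EqvGen.symm _ _ hj0) (Relation.EqvGen.symm _ _ h1)))
    constructor
    · have h := floating_card_eq (connSetoid (hat α) η) (connSetoid α η) isMid
        (fun x y hh => hat_le α η hh) hinjB
      have hp : Phi (hat α) η = Phi α η := h
      rw [hp]; ring
    · have toCA : ∀ i j : Fin n, conn α η (Sum.inl i) (Sum.inr (Sum.inr j)) →
          conn (hat α) η (Sum.inl i) (Sum.inl a0) := by
        intro i j hc
        rcases (cchar _ _).mp hc with h | ⟨h1, h2⟩
        · exact absurd ((topP h).mp (isTop_inl i)) (not_isTop_inr _)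
        · rcases h1 with h1 | h1
          · exact h1
          · exact absurd ((topP h1).mp (isTop_inl i)) (not_isTop_inr _)
      unfold rnk
      rw [Nat.card_eq_one_iff_unique]
      constructor
      · constructor
        rintro ⟨c, ⟨i, hi⟩, ⟨j, hj⟩⟩ ⟨c', ⟨i', hi'⟩, ⟨j', hj'⟩⟩
        apply Subtype.ext
        have r1 : conn α η (Sum.inl i) (Sum.inr (Sum.inr j)) :=
          Quotient.exact (hi.trans hj.symm)
        have r2 : conn α η (Sum.inl i') (Sum.inr (Sum.inr j')) :=
          Quotient.exact (hi'.trans hj'.symm)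
        have e : conn α η (Sum.inl i) (Sum.inl i') := (cchar _ _).mpr
          (Or.inr ⟨Or.inl (toCA i j r1), Or.inl (toCA i' j' r2)⟩)
        show c = c'
        rw [← hi, ← hi']
        exact Quotient.sound e
      · have hbc : conn α η (Sum.inr (Sum.inr j0)) (Sum.inl a0) :=
          (cchar _ _).mpr (Or.inr ⟨Or.inr (Relation.EqvGen.symm _ _ hj0),
            Or.inl (Relation.EqvGen.refl _)⟩)
        exact ⟨⟨Quotient.mk (pmul α η) (Sum.inl a0), ⟨a0, rfl⟩, ⟨j0, Quotient.sound hbc⟩⟩⟩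
  · -- the merged class does not reach the bottom row: Φ drops by one, product has rank 0
    left
    push_neg at hbot
    have hw : ∀ z, conn (hat α) η z (Sum.inr (Sum.inl b0)) → isMid z := by
      intro z hz
      rcases z with i | i | i
      · exact absurd ((topP hz).mp (isTop_inl i)) (not_isTop_inr _)
      · exact isMid_mid i
      · exact absurd (Relation.EqvGen.symm _ _ hz) (hbot i)
    have hwnf : ∃ z, conn α η z (Sum.inr (Sum.inl b0)) ∧ ¬ isMid z :=
      ⟨Sum.inl a0, cross, not_isMid_inl a0⟩
    have hinjA : ∀ x y : W n, conn α η x y → (∀ z, conn (hat α) η z x → isMid z) →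
        ¬ conn (hat α) η x (Sum.inr (Sum.inl b0)) → conn (hat α) η x y := by
      intro x y hxy hfl hnw
      rcases (cchar x y).mp hxy with h | ⟨h1, h2⟩
      · exact h
      · exfalso
        rcases h1 with h1 | h1
        · exact not_isMid_inl a0 (hfl _ (Relation.EqvGen.symm _ _ h1))
        · exact hnw h1
    constructor
    · have h := floating_card_add_one (connSetoid (hat α) η) (connSetoid α η) isMid
        (Sum.inr (Sum.inl b0)) (fun x y hh => hat_le α η hh) hw hwnf hinjA
      have hp : Phi (hat α) η = Phi α η + 1 := h
      rw [hp]; push_cast; ring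
    · rw [rnk_eq_zero_iff]
      intro i j hij
      have hc : conn α η (Sum.inl i) (Sum.inr (Sum.inr j)) := hij
      rcases (cchar _ _).mp hc with h | ⟨h1, h2⟩
      · exact not_isTop_inr _ ((topP h).mp (isTop_inl i))
      · rcases h2 with h2 | h2
        · exact not_isTop_inr _ ((topP h2).mpr (isTop_inl a0))
        · exact hbot j (Relation.EqvGen.symm _ _ h2)

end RankDropAux3
section RankDropAux4

/-- The involution of `P_n` swapping primed and unprimed points. -/
def pstar (β : PM n) : PM n :=
  ⟨fun x y => β.r (Sum.swap x) (Sum.swap y),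
   ⟨fun _ => β.iseqv.refl _, fun h => β.iseqv.symm h, fun h h' => β.iseqv.trans h h'⟩⟩

/-- The vertical flip of the three-row vertex set. -/
def wswap : W n → W n
  | Sum.inl i => Sum.inr (Sum.inr i)
  | Sum.inr (Sum.inl i) => Sum.inr (Sum.inl i)
  | Sum.inr (Sum.inr i) => Sum.inl i

lemma wswap_invol (x : W n) : wswap (wswap x) = x := by
  rcases x with i | i | i <;> rfl

lemma wswap_topMid (u : V n) : wswap (topMid u) = midBot (Sum.swap u) := by
  cases u <;> rfl

lemma wswap_midBot (u : V n) : wswap (midBot u) = topMid (Sum.swap u) := by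
  cases u <;> rfl

lemma wswap_topBot (u : V n) : wswap (topBot u) = topBot (Sum.swap u) := by
  cases u <;> rfl

lemma isMid_wswap (x : W n) : isMid (wswap x) ↔ isMid x := by
  rcases x with i | i | i
  · exact iff_of_false (not_isMid_bot i) (not_isMid_inl i)
  · exact Iff.rfl
  · exact iff_of_false (not_isMid_inl i) (not_isMid_bot i)

lemma graphRel_star_out (α η : PM n) (a b : W n) (e : graphRel (pstar α) (pstar η) a b) :
    graphRel η α (wswap a) (wswap b) := by
  rcases e with ⟨u, v, huv, rfl, rfl⟩ | ⟨u, v, huv, rfl, rfl⟩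
  · exact Or.inr ⟨Sum.swap u, Sum.swap v, huv, wswap_topMid u, wswap_topMid v⟩
  · exact Or.inl ⟨Sum.swap u, Sum.swap v, huv, wswap_midBot u, wswap_midBot v⟩

lemma graphRel_star_in (α η : PM n) (a b : W n) (e : graphRel η α a b) :
    graphRel (pstar α) (pstar η) (wswap a) (wswap b) := by
  rcases e with ⟨u, v, huv, rfl, rfl⟩ | ⟨u, v, huv, rfl, rfl⟩
  · refine Or.inr ⟨Sum.swap u, Sum.swap v, ?_, wswap_topMid u, wswap_topMid v⟩
    show η.r (Sum.swap (Sum.swap u)) (Sum.swap (Sum.swap v))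
    rw [Sum.swap_swap, Sum.swap_swap]; exact huv
  · refine Or.inl ⟨Sum.swap u, Sum.swap v, ?_, wswap_midBot u, wswap_midBot v⟩
    show α.r (Sum.swap (Sum.swap u)) (Sum.swap (Sum.swap v))
    rw [Sum.swap_swap, Sum.swap_swap]; exact huv

lemma conn_star_out (α η : PM n) {a b : W n} (h : conn (pstar α) (pstar η) a b) :
    conn η α (wswap a) (wswap b) :=
  eqvGen_map' wswap (graphRel_star_out α η) h

lemma conn_star_in (α η : PM n) {a b : W n} (h : conn η α a b) :
    conn (pstar α) (pstar η) (wswap a) (wswap b) :=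
  eqvGen_map' wswap (graphRel_star_in α η) h

/-- Generic transfer of class counts along a relation-compatible involution. -/
lemma quot_card_congr {A : Type*} (σ τ : Setoid A) (f : A → A)
    (hinv : ∀ x, f (f x) = x)
    (hrel : ∀ x y, σ.r x y → τ.r (f x) (f y))
    (hrel' : ∀ x y, τ.r x y → σ.r (f x) (f y))
    (P : Quotient σ → Prop) (Q : Quotient τ → Prop)
    (hPQ : ∀ x : A, P (Quotient.mk σ x) → Q (Quotient.mk τ (f x)))
    (hQP : ∀ x : A, Q (Quotient.mk τ x) → P (Quotient.mk σ (f x))) :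
    Nat.card {c : Quotient σ // P c} = Nat.card {c : Quotient τ // Q c} := by
  apply Nat.card_congr
  have wdG : ∀ a b : A, σ.r a b →
      Quotient.mk τ (f a) = Quotient.mk τ (f b) :=
    fun a b h => Quotient.sound (hrel a b h)
  have wdG' : ∀ a b : A, τ.r a b →
      Quotient.mk σ (f a) = Quotient.mk σ (f b) :=
    fun a b h => Quotient.sound (hrel' a b h)
  have memG : ∀ c : Quotient σ, P c →
      Q (Quotient.lift (fun x => Quotient.mk τ (f x)) wdG c) := by
    intro c hc
    obtain ⟨x, rfl⟩ := Quotient.exists_rep c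
    exact hPQ x hc
  have memG' : ∀ c : Quotient τ, Q c →
      P (Quotient.lift (fun x => Quotient.mk σ (f x)) wdG' c) := by
    intro c hc
    obtain ⟨x, rfl⟩ := Quotient.exists_rep c
    exact hQP x hc
  refine ⟨fun c => ⟨Quotient.lift (fun x => Quotient.mk τ (f x)) wdG c.1, memG c.1 c.2⟩,
    fun c => ⟨Quotient.lift (fun x => Quotient.mk σ (f x)) wdG' c.1, memG' c.1 c.2⟩, ?_, ?_⟩
  · rintro ⟨c, hc⟩
    apply Subtype.ext
    obtain ⟨x, rfl⟩ := Quotient.exists_rep c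
    show Quotient.mk σ (f (f x)) = Quotient.mk σ x
    rw [hinv]
  · rintro ⟨c, hc⟩
    apply Subtype.ext
    obtain ⟨x, rfl⟩ := Quotient.exists_rep c
    show Quotient.mk τ (f (f x)) = Quotient.mk τ x
    rw [hinv]

lemma rnk_pstar (β : PM n) : rnk (pstar β) = rnk β := by
  unfold rnk
  refine quot_card_congr (pstar β) β Sum.swap Sum.swap_swap
    (fun x y h => h)
    (fun x y h => show β.r (Sum.swap (Sum.swap x)) (Sum.swap (Sum.swap y)) by
      rw [Sum.swap_swap, Sum.swap_swap]; exact h)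
    _ _ ?_ ?_
  · rintro x ⟨⟨i, hi⟩, ⟨j, hj⟩⟩
    refine ⟨⟨j, ?_⟩, ⟨i, ?_⟩⟩
    · have h' : (pstar β).r (Sum.inr j) x := Quotient.exact hj
      exact Quotient.sound h'
    · have h' : (pstar β).r (Sum.inl i) x := Quotient.exact hi
      exact Quotient.sound h'
  · rintro x ⟨⟨i, hi⟩, ⟨j, hj⟩⟩
    refine ⟨⟨j, ?_⟩, ⟨i, ?_⟩⟩
    · refine Quotient.sound ?_
      show β.r (Sum.swap (Sum.inl j)) (Sum.swap (Sum.swap x))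
      rw [Sum.swap_swap]
      exact Quotient.exact hj
    · refine Quotient.sound ?_
      show β.r (Sum.swap (Sum.inr i)) (Sum.swap (Sum.swap x))
      rw [Sum.swap_swap]
      exact Quotient.exact hi

lemma Phi_pstar (α η : PM n) : Phi (pstar α) (pstar η) = Phi η α := by
  unfold Phi
  refine quot_card_congr (connSetoid (pstar α) (pstar η)) (connSetoid η α) wswap wswap_invol
    (fun x y h => conn_star_out α η h)
    (fun x y h => conn_star_in α η h)
    _ _ ?_ ?_
  · intro x hx z hz
    have h1 : conn η α z (wswap x) := Quotient.exact hz
    have h2 : conn (pstar α) (pstar η) (wswap z) x := by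
      have := conn_star_in α η h1
      rwa [wswap_invol] at this
    exact (isMid_wswap z).mp (hx _ (Quotient.sound h2))
  · intro x hx z hz
    have h1 : conn (pstar α) (pstar η) z (wswap x) := Quotient.exact hz
    have h2 : conn η α (wswap z) x := by
      have := conn_star_out α η h1
      rwa [wswap_invol] at this
    exact (isMid_wswap z).mp (hx _ (Quotient.sound h2))

lemma pmul_pstar (α η : PM n) : pmul (pstar α) (pstar η) = pstar (pmul η α) := by
  apply Setoid.ext
  intro x y
  constructor
  · intro h
    have := conn_star_out α η h
    simp only [wswap_topBot] at this
    exact this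
  · intro h
    have := conn_star_in α η h
    simp only [wswap_topBot, Sum.swap_swap] at this
    exact this

lemma side_swap (x : V n) : side (Sum.swap x) = ! side x := by cases x <;> rfl

lemma hat_pstar (β : PM n) : hat (pstar β) = pstar (hat β) := by
  apply Setoid.ext
  intro x y
  constructor
  · rintro ⟨h, hs⟩
    exact ⟨h, by rw [side_swap, side_swap, hs]⟩
  · rintro ⟨h, hs⟩
    refine ⟨h, ?_⟩
    rw [side_swap, side_swap] at hs
    exact Bool.not_inj hs

end RankDropAux4
/-- For `α ∈ I_1` and any `η ∈ P_n`:
`rank α − rank(αη) = Φ(α̂,η) − Φ(α,η)` and `rank α − rank(ηα) = Φ(η,α̂) − Φ(η,α)`,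
as integers. -/
theorem rank_drop (n : ℕ) (hn : 1 ≤ n) (α : PM n) (hα : rnk α ≤ 1) (η : PM n) :
    (rnk α : ℤ) - (rnk (pmul α η) : ℤ) = (Phi (hat α) η : ℤ) - (Phi α η : ℤ) ∧
    (rnk α : ℤ) - (rnk (pmul η α) : ℤ) = (Phi η (hat α) : ℤ) - (Phi η α : ℤ) := by
  have part1 : ∀ β : PM n, rnk β ≤ 1 → ∀ θ : PM n,
      (rnk β : ℤ) - (rnk (pmul β θ) : ℤ) = (Phi (hat β) θ : ℤ) - (Phi β θ : ℤ) := by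
    intro β hβ θ
    rcases Nat.le_one_iff_eq_zero_or_eq_one.mp hβ with h0 | h1
    · have hnc := (rnk_eq_zero_iff β).mp h0
      rw [hat_eq_self β hnc, h0, rnk_pmul_zero β θ hnc]
      simp
    · obtain ⟨a0, b0, hT, hU⟩ := rank_one_struct β h1
      rcases key1 β θ a0 b0 hT hU with ⟨hphi, hrk⟩ | ⟨hphi, hrk⟩ <;>
        rw [h1, hrk, hphi] <;> norm_num
  refine ⟨part1 α hα η, ?_⟩
  have h1 := part1 (pstar α) (by rw [rnk_pstar]; exact hα) (pstar η)
  rw [rnk_pstar, pmul_pstar, rnk_pstar, hat_pstar, Phi_pstar, Phi_pstar] at h1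
  exact h1

end TPM
end

section
/- Let 2 ≤ q ≤ n, let N be a normal subgroup of S_q, let α, β ∈ D_q be H-related in P_n, and let γ ∈ P_n. Then: (1) αγ ∈ D_q if and only if βγ ∈ D_q, and in that case (α,β) ∈ ν_N if and only if (αγ,βγ) ∈ ν_N; (2) γα ∈ D_q if and only if γβ ∈ D_q, and in that case (α,β) ∈ ν_N if and only if (γα,γβ) ∈ ν_N. -/
namespace TPM

variable {n : ℕ}

section Proofs12


open Relation Sum

variable {X Y : Type*}

lemma eqvGen_le {r e : X → X → Prop} (he : Equivalence e) (h : ∀ a b, r a b → e a b)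
    {a b : X} (hab : Relation.EqvGen r a b) : e a b :=
  he.eqvGen_iff.mp (Relation.EqvGen.mono h _ _ hab)

lemma eqvGen_map {f : X → Y} {r : X → X → Prop} {s : Y → Y → Prop}
    (h2 : ∀ a b, r a b → Relation.EqvGen s (f a) (f b)) {a b : X} :
    Relation.EqvGen r a b → Relation.EqvGen s (f a) (f b) := by
  intro h
  induction h with
  | rel a b hab => exact h2 _ _ hab
  | refl => exact .refl _
  | symm a b _ ih => exact .symm _ _ ih
  | trans a b c _ _ ih1 ih2 => exact .trans _ _ _ ih1 ih2

lemma eqvGen_embed_back {f : X → Y} (hf : Function.Injective f) {r : X → X → Prop}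
    {s : Y → Y → Prop}
    (h1 : ∀ x y, s x y → ∃ a b, x = f a ∧ y = f b ∧ Relation.EqvGen r a b)
    {x y : Y} (h : Relation.EqvGen s x y) :
    x = y ∨ ∃ a b, x = f a ∧ y = f b ∧ Relation.EqvGen r a b := by
  induction h with
  | rel x y hxy => exact Or.inr (h1 _ _ hxy)
  | refl => exact Or.inl rfl
  | symm x y _ ih =>
    rcases ih with h | ⟨a, b, ha, hb, hab⟩
    · exact Or.inl h.symm
    · exact Or.inr ⟨b, a, hb, ha, .symm _ _ hab⟩
  | trans x y z _ _ ih1 ih2 =>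
    rcases ih1 with h | ⟨a, b, ha, hb, hab⟩
    · rcases ih2 with h' | ⟨a', b', ha', hb', hab'⟩
      · exact Or.inl (h.trans h')
      · exact Or.inr ⟨a', b', h ▸ ha', hb', hab'⟩
    · rcases ih2 with h' | ⟨a', b', ha', hb', hab'⟩
      · exact Or.inr ⟨a, b, ha, h' ▸ hb, hab⟩
      · refine Or.inr ⟨a, b', ha, hb', .trans _ _ _ hab ?_⟩
        have : b = a' := hf (by rw [← hb, ← ha'])
        exact this ▸ hab'

lemma eqvGen_embed {f : X → Y} (hf : Function.Injective f) {r : X → X → Prop}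
    {s : Y → Y → Prop}
    (h1 : ∀ x y, s x y → ∃ a b, x = f a ∧ y = f b ∧ Relation.EqvGen r a b)
    (h2 : ∀ a b, r a b → Relation.EqvGen s (f a) (f b)) (a b : X) :
    Relation.EqvGen s (f a) (f b) ↔ Relation.EqvGen r a b := by
  constructor
  · intro h
    rcases eqvGen_embed_back hf h1 h with h | ⟨a', b', ha, hb, hab⟩
    · exact hf h ▸ Relation.EqvGen.refl _
    · have : a = a' := hf ha
      have hb' : b = b' := hf hb
      exact this ▸ hb' ▸ hab
  · exact eqvGen_map h2

/-- Vertices with no incident edge are connected only to themselves. -/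
lemma eqvGen_isolated {r : X → X → Prop} {x y : X} (h : Relation.EqvGen r x y)
    (hx : ∀ z, ¬ r x z ∧ ¬ r z x) : x = y := by
  have key : ∀ a b, Relation.EqvGen r a b →
      a = b ∨ ((∃ z, r a z ∨ r z a) ∧ (∃ z, r b z ∨ r z b)) := by
    intro a b h
    induction h with
    | rel a b hab => exact Or.inr ⟨⟨b, Or.inl hab⟩, ⟨a, Or.inr hab⟩⟩
    | refl => exact Or.inl rfl
    | symm a b _ ih => exact ih.imp Eq.symm And.symm
    | trans a b c _ _ ih1 ih2 =>
      rcases ih1 with h | ⟨ha, hb⟩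
      · exact h ▸ ih2
      · rcases ih2 with h' | ⟨hb', hc⟩
        · exact Or.inr ⟨ha, h' ▸ hb⟩
        · exact Or.inr ⟨ha, hc⟩
  rcases key _ _ h with h | ⟨⟨z, hz⟩, _⟩
  · exact h
  · rcases hz with hz | hz
    · exact absurd hz (hx z).1
    · exact absurd hz (hx z).2

/-- Flattening: generating with the closure of part of the generators changes nothing. -/
lemma eqvGen_flatten {t e : X → X → Prop} {x y : X} :
    Relation.EqvGen (fun a b => Relation.EqvGen t a b ∨ e a b) x y ↔
      Relation.EqvGen (fun a b => t a b ∨ e a b) x y := by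
  constructor
  · intro h
    refine eqvGen_le (Relation.EqvGen.is_equivalence _) ?_ h
    rintro a b (h | h)
    · exact Relation.EqvGen.mono (fun a b h => Or.inl h) _ _ h
    · exact Relation.EqvGen.rel _ _ (Or.inr h)
  · intro h
    refine Relation.EqvGen.mono ?_ _ _ h
    rintro a b (h | h)
    · exact Or.inl (Relation.EqvGen.rel _ _ h)
    · exact Or.inr h

/-- Eliminating a set `B` of vertices untouched by `e`, when `t` is an equivalence. -/
lemma eqvGen_elim_mid {t e : X → X → Prop} (ht : Equivalence t) (B : X → Prop)
    (he : ∀ x y, e x y → ¬ B x ∧ ¬ B y) {x y : X}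
    (h : Relation.EqvGen (fun a b => t a b ∨ e a b) x y) (hx : ¬ B x) (hy : ¬ B y) :
    Relation.EqvGen (fun a b => (¬ B a ∧ ¬ B b ∧ t a b) ∨ e a b) x y := by
  set G := Relation.EqvGen (fun a b => (¬ B a ∧ ¬ B b ∧ t a b) ∨ e a b) with hG
  set P : X → X → Prop := fun a b =>
    t a b ∨ ∃ u v, ¬ B u ∧ ¬ B v ∧ t a u ∧ G u v ∧ t v b with hP
  have hPe : Equivalence P := by
    constructor
    · intro a; exact Or.inl (ht.refl a)
    · rintro a b (h | ⟨u, v, hu, hv, h1, h2, h3⟩)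
      · exact Or.inl (ht.symm h)
      · exact Or.inr ⟨v, u, hv, hu, ht.symm h3, .symm _ _ h2, ht.symm h1⟩
    · rintro a b c (h | ⟨u, v, hu, hv, h1, h2, h3⟩) (h' | ⟨u', v', hu', hv', h1', h2', h3'⟩)
      · exact Or.inl (ht.trans h h')
      · exact Or.inr ⟨u', v', hu', hv', ht.trans h h1', h2', h3'⟩
      · exact Or.inr ⟨u, v, hu, hv, h1, h2, ht.trans h3 h'⟩
      · refine Or.inr ⟨u, v', hu, hv', h1, ?_, h3'⟩
        exact .trans _ _ _ h2 (.trans _ _ _ (.rel _ _ (Or.inl ⟨hv, hu', ht.trans h3 h1'⟩)) h2')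
  have key : P x y := by
    refine eqvGen_le hPe ?_ h
    rintro a b (h | h)
    · exact Or.inl h
    · exact Or.inr ⟨a, b, (he _ _ h).1, (he _ _ h).2, ht.refl a, .rel _ _ (Or.inr h), ht.refl b⟩
  rcases key with h | ⟨u, v, hu, hv, h1, h2, h3⟩
  · exact .rel _ _ (Or.inl ⟨hx, hy, h⟩)
  · exact .trans _ _ _ (.rel _ _ (Or.inl ⟨hx, hu, h1⟩))
      (.trans _ _ _ h2 (.rel _ _ (Or.inl ⟨hv, hy, h3⟩)))




open Relation Sum

variable {n : ℕ}

/-- Top / middle / bottom vertices of the three-row set. -/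
def tp (i : Fin n) : W n := Sum.inl i
def md (i : Fin n) : W n := Sum.inr (Sum.inl i)
def bt (i : Fin n) : W n := Sum.inr (Sum.inr i)

@[simp] lemma topMid_inl (i : Fin n) : topMid (Sum.inl i) = tp i := rfl
@[simp] lemma topMid_inr (i : Fin n) : topMid (Sum.inr i) = md i := rfl
@[simp] lemma midBot_inl (i : Fin n) : midBot (Sum.inl i) = md i := rfl
@[simp] lemma midBot_inr (i : Fin n) : midBot (Sum.inr i) = bt i := rfl
@[simp] lemma topBot_inl (i : Fin n) : topBot (Sum.inl i) = tp i := rfl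
@[simp] lemma topBot_inr (i : Fin n) : topBot (Sum.inr i) = bt i := rfl

/-- The row-swapping involution of `V n`. -/
def flV : V n → V n
  | Sum.inl i => Sum.inr i
  | Sum.inr i => Sum.inl i

@[simp] lemma flV_flV (x : V n) : flV (flV x) = x := by cases x <;> rfl

lemma flV_inj : Function.Injective (flV (n := n)) := by
  intro x y h; have := congrArg flV h; simpa using this

/-- The reflection of a partition. -/
def flipP (α : PM n) : PM n :=
  ⟨fun x y => α.r (flV x) (flV y),
   ⟨fun _ => α.iseqv.refl _, fun h => α.iseqv.symm h, fun h h' => α.iseqv.trans h h'⟩⟩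

@[simp] lemma flipP_r (α : PM n) (x y : V n) : (flipP α).r x y ↔ α.r (flV x) (flV y) :=
  Iff.rfl

@[simp] lemma flip_flip (α : PM n) : flipP (flipP α) = α := by
  apply Setoid.ext; intro a b; change α.r _ _ ↔ _; simp

/-- Row reversal on the three-row set. -/
def revW : W n → W n
  | Sum.inl i => Sum.inr (Sum.inr i)
  | Sum.inr (Sum.inl i) => Sum.inr (Sum.inl i)
  | Sum.inr (Sum.inr i) => Sum.inl i

@[simp] lemma revW_tp (i : Fin n) : revW (tp i) = bt i := rfl
@[simp] lemma revW_md (i : Fin n) : revW (md i) = md i := rfl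
@[simp] lemma revW_bt (i : Fin n) : revW (bt i) = tp i := rfl

@[simp] lemma revW_revW (x : W n) : revW (revW x) = x := by
  rcases x with i | i | i <;> rfl

lemma revW_inj : Function.Injective (revW (n := n)) := by
  intro x y h; have := congrArg revW h; simpa using this

lemma revW_topMid (u : V n) : revW (topMid u) = midBot (flV u) := by cases u <;> rfl
lemma revW_midBot (u : V n) : revW (midBot u) = topMid (flV u) := by cases u <;> rfl
lemma revW_topBot (u : V n) : revW (topBot u) = topBot (flV u) := by cases u <;> rfl

lemma graphRel_flip (α β : PM n) (x y : W n) :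
    graphRel (flipP β) (flipP α) x y ↔ graphRel α β (revW x) (revW y) := by
  constructor
  · rintro (⟨u, v, h, rfl, rfl⟩ | ⟨u, v, h, rfl, rfl⟩)
    · exact Or.inr ⟨flV u, flV v, h, (revW_topMid u), (revW_topMid v)⟩
    · exact Or.inl ⟨flV u, flV v, h, (revW_midBot u), (revW_midBot v)⟩
  · intro h
    rcases h with ⟨u, v, h, hx, hy⟩ | ⟨u, v, h, hx, hy⟩
    · refine Or.inr ⟨flV u, flV v, by simpa using h, ?_, ?_⟩
      · have := congrArg revW hx; rw [revW_revW, revW_topMid] at this; simpa using this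
      · have := congrArg revW hy; rw [revW_revW, revW_topMid] at this; simpa using this
    · refine Or.inl ⟨flV u, flV v, by simpa using h, ?_, ?_⟩
      · have := congrArg revW hx; rw [revW_revW, revW_midBot] at this; simpa using this
      · have := congrArg revW hy; rw [revW_revW, revW_midBot] at this; simpa using this

lemma conn_flip (α β : PM n) (x y : W n) :
    conn (flipP β) (flipP α) x y ↔ conn α β (revW x) (revW y) := by
  have := eqvGen_embed (f := revW (n := n)) revW_inj
    (r := graphRel (flipP β) (flipP α)) (s := graphRel α β)
    (fun a b hab => by
      refine ⟨revW a, revW b, (revW_revW a).symm, (revW_revW b).symm, .rel _ _ ?_⟩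
      rw [graphRel_flip]; simpa using hab)
    (fun a b hab => .rel _ _ ((graphRel_flip α β a b).mp hab))
  exact (this x y).symm

lemma pmul_flip (α β : PM n) : pmul (flipP β) (flipP α) = flipP (pmul α β) := by
  apply Setoid.ext; intro a b
  change conn _ _ _ _ ↔ conn α β _ _
  rw [conn_flip]
  rw [revW_topBot, revW_topBot]

/-- The identity partition. -/
def oneP : PM n :=
  ⟨fun x y => Sum.elim id id x = Sum.elim id id y,
   ⟨fun _ => rfl, fun h => h.symm, fun h h' => h.trans h'⟩⟩

@[simp] lemma flip_one : flipP (oneP (n := n)) = oneP := by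
  apply Setoid.ext; intro a b
  change Sum.elim id id (flV a) = Sum.elim id id (flV b) ↔ _
  cases a <;> cases b <;> simp [flV, oneP] <;> exact Iff.rfl

lemma pmul_one (α : PM n) : pmul α oneP = α := by
  have key : ∀ x y : W n, conn α oneP x y →
      α.r (Sum.elim Sum.inl (Sum.elim Sum.inr Sum.inr) x)
          (Sum.elim Sum.inl (Sum.elim Sum.inr Sum.inr) y) := by
    set g : W n → V n := Sum.elim Sum.inl (Sum.elim Sum.inr Sum.inr) with hg
    intro x y hxy
    refine eqvGen_le (e := fun x y : W n => α.r (g x) (g y))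
      ⟨fun _ => α.iseqv.refl _, fun h => α.iseqv.symm h,
        fun h h' => α.iseqv.trans h h'⟩ ?_ hxy
    rintro x y (⟨u, v, h, rfl, rfl⟩ | ⟨u, v, h, rfl, rfl⟩)
    · cases u <;> cases v <;> simpa [hg, tp, md] using h
    · have hidx : ∀ w : V n, g (midBot w) = Sum.inr (Sum.elim id id w) := by
        intro w; cases w <;> rfl
      rw [hidx u, hidx v]
      have : Sum.elim id id u = Sum.elim id id v := h
      rw [this]
  apply Setoid.ext; intro a b
  constructor
  · intro h
    have := key _ _ h
    cases a <;> cases b <;> simpa [tp, bt] using this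
  · intro h
    have step : ∀ u : V n, conn α oneP (topBot u) (topMid u) := by
      intro u
      cases u with
      | inl i => exact .refl _
      | inr i => exact .symm _ _ (.rel _ _ (Or.inr ⟨Sum.inl i, Sum.inr i, rfl, rfl, rfl⟩))
    exact .trans _ _ _ (step a) (.trans _ _ _ (.rel _ _ (Or.inl ⟨a, b, h, rfl, rfl⟩))
      (.symm _ _ (step b)))

lemma one_pmul (α : PM n) : pmul oneP α = α := by
  have := pmul_flip (flipP α) oneP
  rw [flip_one, flip_flip] at this
  have h2 := congrArg flipP (pmul_one (flipP α))
  rw [← pmul_flip, flip_one, flip_flip] at h2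
  exact h2




open Relation Sum

variable {n : ℕ}

abbrev W4 (n : ℕ) := Fin n ⊕ (Fin n ⊕ (Fin n ⊕ Fin n))

def q1 (i : Fin n) : W4 n := .inl i
def q2 (i : Fin n) : W4 n := .inr (.inl i)
def q3 (i : Fin n) : W4 n := .inr (.inr (.inl i))
def q4 (i : Fin n) : W4 n := .inr (.inr (.inr i))

def row12 : V n → W4 n
  | Sum.inl i => q1 i
  | Sum.inr i => q2 i

def row23 : V n → W4 n
  | Sum.inl i => q2 i
  | Sum.inr i => q3 i

def row34 : V n → W4 n
  | Sum.inl i => q3 i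
  | Sum.inr i => q4 i

/-- Edges of the four-row graph of `α, β, γ`. -/
def e12 (α β : PM n) (x y : W4 n) : Prop :=
  (∃ u v, α.r u v ∧ x = row12 u ∧ y = row12 v) ∨
  (∃ u v, β.r u v ∧ x = row23 u ∧ y = row23 v)

def e34 (γ : PM n) (x y : W4 n) : Prop :=
  ∃ u v, γ.r u v ∧ x = row34 u ∧ y = row34 v

def conn4 (α β γ : PM n) : W4 n → W4 n → Prop :=
  Relation.EqvGen (fun x y => e12 α β x y ∨ e34 γ x y)

/-- Embedding of the three-row set as rows 1,2,3. -/
def i123 : W n → W4 n := Sum.map id (Sum.map id Sum.inl)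

/-- Embedding of the three-row set as rows 1,3,4. -/
def i134 : W n → W4 n := Sum.map id Sum.inr

lemma i123_inj : Function.Injective (i123 (n := n)) :=
  Function.Injective.sumMap (fun _ _ h => h)
    (Function.Injective.sumMap (fun _ _ h => h) Sum.inl_injective)

lemma i134_inj : Function.Injective (i134 (n := n)) :=
  Function.Injective.sumMap (fun _ _ h => h) Sum.inr_injective

lemma i123_topMid (u : V n) : i123 (topMid u) = row12 u := by cases u <;> rfl
lemma i123_midBot (u : V n) : i123 (midBot u) = row23 u := by cases u <;> rfl
lemma i134_topMid (u : V n) : i134 (topMid u) = i123 (topBot u) := by cases u <;> rfl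
lemma i134_midBot (u : V n) : i134 (midBot u) = row34 u := by cases u <;> rfl

/-- Rows 1–3 connectivity pulls back to `Γ(α,β)`. -/
lemma e12gen_iff (α β : PM n) (a b : W n) :
    Relation.EqvGen (e12 α β) (i123 a) (i123 b) ↔ conn α β a b := by
  refine eqvGen_embed i123_inj ?_ ?_ a b
  · rintro x y (⟨u, v, h, rfl, rfl⟩ | ⟨u, v, h, rfl, rfl⟩)
    · exact ⟨topMid u, topMid v, (i123_topMid u).symm, (i123_topMid v).symm,
        .rel _ _ (Or.inl ⟨u, v, h, rfl, rfl⟩)⟩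
    · exact ⟨midBot u, midBot v, (i123_midBot u).symm, (i123_midBot v).symm,
        .rel _ _ (Or.inr ⟨u, v, h, rfl, rfl⟩)⟩
  · rintro a b (⟨u, v, h, rfl, rfl⟩ | ⟨u, v, h, rfl, rfl⟩)
    · exact .rel _ _ (Or.inl ⟨u, v, h, i123_topMid u, i123_topMid v⟩)
    · exact .rel _ _ (Or.inr ⟨u, v, h, i123_midBot u, i123_midBot v⟩)

def isRow2 (x : W4 n) : Prop := ∃ i, x = q2 i

lemma e34_not_row2 (γ : PM n) (x y : W4 n) (h : e34 γ x y) : ¬ isRow2 x ∧ ¬ isRow2 y := by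
  obtain ⟨u, v, _, rfl, rfl⟩ := h
  constructor
  · rintro ⟨i, hi⟩; cases u <;> simp [row34, q2, q3, q4] at hi
  · rintro ⟨i, hi⟩; cases v <;> simp [row34, q2, q3, q4] at hi

lemma not_row2_range (x : W4 n) (h : ¬ isRow2 x) : ∃ a : W n, x = i134 a := by
  rcases x with i | i | i | i
  · exact ⟨Sum.inl i, rfl⟩
  · exact absurd ⟨i, rfl⟩ h
  · exact ⟨Sum.inr (Sum.inl i), rfl⟩
  · exact ⟨Sum.inr (Sum.inr i), rfl⟩

lemma q4_isolated_e12 (α β : PM n) (i : Fin n) (z : W4 n) :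
    ¬ e12 α β (q4 i) z ∧ ¬ e12 α β z (q4 i) := by
  constructor
  · rintro (⟨u, v, _, hx, _⟩ | ⟨u, v, _, hx, _⟩) <;>
      (cases u <;> simp [row12, row23, q1, q2, q3, q4] at hx)
  · rintro (⟨u, v, _, _, hy⟩ | ⟨u, v, _, _, hy⟩) <;>
      (cases v <;> simp [row12, row23, q1, q2, q3, q4] at hy)

/-- The key four-row description of a (left-associated) double product. -/
lemma conn4_iff (α β γ : PM n) (x y : W n) :
    conn (pmul α β) γ x y ↔ conn4 α β γ (i134 x) (i134 y) := by
  set c := pmul α β with hc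
  set t : W4 n → W4 n → Prop := Relation.EqvGen (e12 α β) with ht
  have htE : Equivalence t := Relation.EqvGen.is_equivalence _
  set t' : W4 n → W4 n → Prop :=
    fun a b => (¬ isRow2 a ∧ ¬ isRow2 b ∧ t a b) ∨ e34 γ a b with ht'
  -- generated relation with t' equals conn of the three-row graph via i134
  have embed : ∀ a b : W n, Relation.EqvGen t' (i134 a) (i134 b) ↔ conn c γ a b := by
    refine eqvGen_embed i134_inj ?_ ?_
    · rintro x y (⟨hx, hy, hxy⟩ | ⟨u, v, h, rfl, rfl⟩)
      · obtain ⟨a, rfl⟩ := not_row2_range x hx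
        obtain ⟨b, rfl⟩ := not_row2_range y hy
        refine ⟨a, b, rfl, rfl, ?_⟩
        -- analyse t (i134 a) (i134 b)
        rcases a with i | k | k <;> rcases b with j | l | l
        -- we handle each case via e12gen_iff or isolation
        · -- top-top
          have : Relation.EqvGen (e12 α β) (i123 (topBot (Sum.inl i)))
              (i123 (topBot (Sum.inl j))) := hxy
          have hcr : c.r (Sum.inl i) (Sum.inl j) := (e12gen_iff α β _ _).mp this
          exact .rel _ _ (Or.inl ⟨Sum.inl i, Sum.inl j, hcr, rfl, rfl⟩)
        · -- top-mid : i134 (md l) = q3 l = i123 (bt l)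
          have : Relation.EqvGen (e12 α β) (i123 (topBot (Sum.inl i)))
              (i123 (topBot (Sum.inr l))) := hxy
          have hcr : c.r (Sum.inl i) (Sum.inr l) := (e12gen_iff α β _ _).mp this
          exact .rel _ _ (Or.inl ⟨Sum.inl i, Sum.inr l, hcr, rfl, rfl⟩)
        · -- top-bot : q4 isolated
          have := eqvGen_isolated (htE.symm hxy) (q4_isolated_e12 α β l)
          simp [i134, q1, q4] at this
        · have : Relation.EqvGen (e12 α β) (i123 (topBot (Sum.inr k)))
              (i123 (topBot (Sum.inl j))) := hxy
          have hcr : c.r (Sum.inr k) (Sum.inl j) := (e12gen_iff α β _ _).mp this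
          exact .rel _ _ (Or.inl ⟨Sum.inr k, Sum.inl j, hcr, rfl, rfl⟩)
        · have : Relation.EqvGen (e12 α β) (i123 (topBot (Sum.inr k)))
              (i123 (topBot (Sum.inr l))) := hxy
          have hcr : c.r (Sum.inr k) (Sum.inr l) := (e12gen_iff α β _ _).mp this
          exact .rel _ _ (Or.inl ⟨Sum.inr k, Sum.inr l, hcr, rfl, rfl⟩)
        · have := eqvGen_isolated (htE.symm hxy) (q4_isolated_e12 α β l)
          simp [i134, q2, q3, q4] at this
        · have := eqvGen_isolated hxy (q4_isolated_e12 α β k)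
          simp [i134, q1, q4] at this
        · have := eqvGen_isolated hxy (q4_isolated_e12 α β k)
          simp [i134, q2, q3, q4] at this
        · -- bot-bot : both isolated, so equal
          have := eqvGen_isolated hxy (q4_isolated_e12 α β k)
          simp only [i134, Sum.map] at this
          have hkl : k = l := by
            simpa [q4] using this
          subst hkl
          exact .refl _
      · -- e34 edge: γ-edge of the three-row graph
        refine ⟨midBot u, midBot v, (i134_midBot u).symm, (i134_midBot v).symm, ?_⟩
        exact .rel _ _ (Or.inr ⟨u, v, h, rfl, rfl⟩)
    · rintro a b (⟨u, v, h, rfl, rfl⟩ | ⟨u, v, h, rfl, rfl⟩)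
      · -- c-edge: goes to a t'-step
        have hcr : conn α β (topBot u) (topBot v) := h
        have : Relation.EqvGen (e12 α β) (i123 (topBot u)) (i123 (topBot v)) :=
          (e12gen_iff α β _ _).mpr hcr
        rw [← i134_topMid, ← i134_topMid] at this
        refine .rel _ _ (Or.inl ⟨?_, ?_, this⟩)
        · rintro ⟨i, hi⟩; cases u <;> simp [i134, topMid, q2] at hi
        · rintro ⟨i, hi⟩; cases v <;> simp [i134, topMid, q2] at hi
      · exact .rel _ _ (Or.inr ⟨u, v, h, i134_midBot u, i134_midBot v⟩)
  constructor
  · intro h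
    -- conn c γ x y → EqvGen t' → conn4
    have h' := (embed x y).mpr h
    have : conn4 α β γ (i134 x) (i134 y) := by
      refine eqvGen_le (Relation.EqvGen.is_equivalence _) ?_ h'
      rintro a b (⟨-, -, hab⟩ | hab)
      · exact Relation.EqvGen.mono (fun a b h => Or.inl h) _ _ hab
      · exact .rel _ _ (Or.inr hab)
    exact this
  · intro h
    -- conn4 → flatten → elim row2 → embed
    have h1 : Relation.EqvGen (fun a b => t a b ∨ e34 γ a b) (i134 x) (i134 y) := by
      refine eqvGen_flatten.mpr ?_
      exact h
    have hx : ¬ isRow2 (i134 x) := by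
      rintro ⟨i, hi⟩; rcases x with j | j | j <;> simp [i134, q2] at hi
    have hy : ¬ isRow2 (i134 y) := by
      rintro ⟨i, hi⟩; rcases y with j | j | j <;> simp [i134, q2] at hi
    have h2 := eqvGen_elim_mid htE isRow2 (e34_not_row2 γ) h1 hx hy
    exact (embed x y).mp h2




open Relation Sum

variable {n : ℕ}

/-- Row reversal of the four-row set. -/
def rev4 : W4 n → W4 n
  | Sum.inl i => q4 i
  | Sum.inr (Sum.inl i) => q3 i
  | Sum.inr (Sum.inr (Sum.inl i)) => q2 i
  | Sum.inr (Sum.inr (Sum.inr i)) => q1 i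

@[simp] lemma rev4_rev4 (x : W4 n) : rev4 (rev4 x) = x := by
  rcases x with i | i | i | i <;> rfl

lemma rev4_row12 (u : V n) : rev4 (row12 u) = row34 (flV u) := by cases u <;> rfl
lemma rev4_row23 (u : V n) : rev4 (row23 u) = row23 (flV u) := by cases u <;> rfl
lemma rev4_row34 (u : V n) : rev4 (row34 u) = row12 (flV u) := by cases u <;> rfl

lemma edge4_flip (α β γ : PM n) (x y : W4 n) :
    (e12 (flipP γ) (flipP β) x y ∨ e34 (flipP α) x y) →
    (e12 α β (rev4 x) (rev4 y) ∨ e34 γ (rev4 x) (rev4 y)) := by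
  rintro ((⟨u, v, h, rfl, rfl⟩ | ⟨u, v, h, rfl, rfl⟩) | ⟨u, v, h, rfl, rfl⟩)
  · exact Or.inr ⟨flV u, flV v, h, rev4_row12 u, rev4_row12 v⟩
  · exact Or.inl (Or.inr ⟨flV u, flV v, h, rev4_row23 u, rev4_row23 v⟩)
  · exact Or.inl (Or.inl ⟨flV u, flV v, h, rev4_row34 u, rev4_row34 v⟩)

lemma edge4_flip' (α β γ : PM n) (x y : W4 n) :
    (e12 α β x y ∨ e34 γ x y) →
    (e12 (flipP γ) (flipP β) (rev4 x) (rev4 y) ∨ e34 (flipP α) (rev4 x) (rev4 y)) := by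
  rintro ((⟨u, v, h, rfl, rfl⟩ | ⟨u, v, h, rfl, rfl⟩) | ⟨u, v, h, rfl, rfl⟩)
  · refine Or.inr ⟨flV u, flV v, by simpa using h, ?_, ?_⟩ <;>
      (first | (cases u <;> rfl) | (cases v <;> rfl))
  · refine Or.inl (Or.inr ⟨flV u, flV v, by simpa using h, ?_, ?_⟩) <;>
      (first | (cases u <;> rfl) | (cases v <;> rfl))
  · refine Or.inl (Or.inl ⟨flV u, flV v, by simpa using h, ?_, ?_⟩) <;>
      (first | (cases u <;> rfl) | (cases v <;> rfl))

lemma conn4_flip (α β γ : PM n) (x y : W4 n) :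
    conn4 (flipP γ) (flipP β) (flipP α) x y ↔ conn4 α β γ (rev4 x) (rev4 y) := by
  constructor
  · exact fun h => eqvGen_map (f := rev4)
      (fun a b hab => .rel _ _ (edge4_flip α β γ a b hab)) h
  · intro h
    have := eqvGen_map (f := rev4)
      (s := fun x y => e12 (flipP γ) (flipP β) x y ∨ e34 (flipP α) x y)
      (fun a b hab => .rel _ _ (edge4_flip' α β γ a b hab)) h
    simpa [conn4] using this

/-- Associativity of the partition-monoid product. -/
theorem pmul_assoc (α β γ : PM n) : pmul (pmul α β) γ = pmul α (pmul β γ) := by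
  have hR : pmul α (pmul β γ) =
      flipP (pmul (pmul (flipP γ) (flipP β)) (flipP α)) := by
    rw [pmul_flip, pmul_flip, flip_flip]
  apply Setoid.ext; intro x y
  have hL : (pmul (pmul α β) γ).r x y ↔ conn4 α β γ (i134 (topBot x)) (i134 (topBot y)) :=
    conn4_iff α β γ (topBot x) (topBot y)
  rw [hR]
  have hRR : (flipP (pmul (pmul (flipP γ) (flipP β)) (flipP α))).r x y ↔
      conn4 (flipP γ) (flipP β) (flipP α) (i134 (topBot (flV x))) (i134 (topBot (flV y))) :=
    conn4_iff (flipP γ) (flipP β) (flipP α) (topBot (flV x)) (topBot (flV y))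
  rw [hL, hRR, conn4_flip]
  have key : ∀ z : V n, rev4 (i134 (topBot (flV z))) = i134 (topBot z) := by
    intro z; cases z <;> rfl
  rw [key, key]




open Relation Sum

variable {n : ℕ}

/-- Edges of the middle-bottom part of the product graph. -/
def MRel (α γ : PM n) (x y : W n) : Prop :=
  (∃ m m', α.r (Sum.inr m) (Sum.inr m') ∧ x = md m ∧ y = md m') ∨
  (∃ u v, γ.r u v ∧ x = midBot u ∧ y = midBot v)

/-- Middle-bottom connectivity. -/
def Mc (α γ : PM n) : W n → W n → Prop := Relation.EqvGen (MRel α γ)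

lemma MRel_le_graphRel (α γ : PM n) (x y : W n) (h : MRel α γ x y) : graphRel α γ x y := by
  rcases h with ⟨m, m', h, rfl, rfl⟩ | h
  · exact Or.inl ⟨Sum.inr m, Sum.inr m', h, rfl, rfl⟩
  · exact Or.inr h

lemma Mc_le_conn (α γ : PM n) {x y : W n} (h : Mc α γ x y) : conn α γ x y :=
  Relation.EqvGen.mono (MRel_le_graphRel α γ) _ _ h

lemma Mc_congr {α β γ : PM n} (h : ∀ m m', α.r (Sum.inr m) (Sum.inr m') ↔ β.r (Sum.inr m) (Sum.inr m'))
    {x y : W n} : Mc α γ x y ↔ Mc β γ x y := by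
  constructor <;> refine fun hc => Relation.EqvGen.mono ?_ _ _ hc
  · rintro a b (⟨m, m', hm, rfl, rfl⟩ | hm)
    · exact Or.inl ⟨m, m', (h m m').mp hm, rfl, rfl⟩
    · exact Or.inr hm
  · rintro a b (⟨m, m', hm, rfl, rfl⟩ | hm)
    · exact Or.inl ⟨m, m', (h m m').mpr hm, rfl, rfl⟩
    · exact Or.inr hm

/-- The structural decomposition of connectivity in `Γ(α,γ)`. -/
def Drel (α γ : PM n) : W n → W n → Prop
  | Sum.inl i, Sum.inl j =>
      α.r (.inl i) (.inl j) ∨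
        ∃ m m', α.r (.inl i) (.inr m) ∧ α.r (.inl j) (.inr m') ∧ Mc α γ (md m) (md m')
  | Sum.inl i, Sum.inr w => ∃ m, α.r (.inl i) (.inr m) ∧ Mc α γ (md m) (Sum.inr w)
  | Sum.inr w, Sum.inl j => ∃ m, α.r (.inl j) (.inr m) ∧ Mc α γ (md m) (Sum.inr w)
  | Sum.inr w, Sum.inr w' => Mc α γ (Sum.inr w) (Sum.inr w')

lemma McE (α γ : PM n) : Equivalence (Mc α γ) := Relation.EqvGen.is_equivalence _

lemma Mc_md_edge (α γ : PM n) {m m' : Fin n} (h : α.r (Sum.inr m) (Sum.inr m')) :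
    Mc α γ (md m) (md m') := .rel _ _ (Or.inl ⟨m, m', h, rfl, rfl⟩)

lemma Drel_equiv (α γ : PM n) : Equivalence (Drel α γ) := by
  constructor
  · rintro (i | w)
    · exact Or.inl (α.iseqv.refl _)
    · exact (McE α γ).refl _
  · rintro (i | w) (j | w') h
    · rcases h with h | ⟨m, m', h1, h2, h3⟩
      · exact Or.inl (α.iseqv.symm h)
      · exact Or.inr ⟨m', m, h2, h1, (McE α γ).symm h3⟩
    · exact h
    · exact h
    · exact (McE α γ).symm h
  · rintro (i | w) (j | w') (k | w'') h h'
    · -- top top top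
      rcases h with h | ⟨m, m', h1, h2, h3⟩
      · rcases h' with h' | ⟨m2, m2', h1', h2', h3'⟩
        · exact Or.inl (α.iseqv.trans h h')
        · exact Or.inr ⟨m2, m2', α.iseqv.trans h h1', h2', h3'⟩
      · rcases h' with h' | ⟨m2, m2', h1', h2', h3'⟩
        · exact Or.inr ⟨m, m', h1, α.iseqv.trans (α.iseqv.symm h') h2, h3⟩
        · refine Or.inr ⟨m, m2', h1, h2', ?_⟩
          exact (McE α γ).trans h3 ((McE α γ).trans
            (Mc_md_edge α γ (α.iseqv.trans (α.iseqv.symm h2) h1')) h3')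
    · -- top top (mid/bot)
      rcases h with h | ⟨m, m', h1, h2, h3⟩
      · obtain ⟨m2, h1', h2'⟩ := h'
        exact ⟨m2, α.iseqv.trans h h1', h2'⟩
      · obtain ⟨m2, h1', h2'⟩ := h'
        refine ⟨m, h1, ?_⟩
        exact (McE α γ).trans h3 ((McE α γ).trans
          (Mc_md_edge α γ (α.iseqv.trans (α.iseqv.symm h2) h1')) h2')
    · -- top (mid/bot) top
      obtain ⟨m, h1, h2⟩ := h
      obtain ⟨m2, h1', h2'⟩ := h'
      exact Or.inr ⟨m, m2, h1, h1', (McE α γ).trans h2 ((McE α γ).symm h2')⟩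
    · -- top (mid/bot) (mid/bot)
      obtain ⟨m, h1, h2⟩ := h
      exact ⟨m, h1, (McE α γ).trans h2 h'⟩
    · -- (mid/bot) top top
      obtain ⟨m, h1, h2⟩ := h
      rcases h' with h' | ⟨m2, m2', h1', h2', h3'⟩
      · exact ⟨m, α.iseqv.trans (α.iseqv.symm h') h1, h2⟩
      · refine ⟨m2', h2', ?_⟩
        exact (McE α γ).trans ((McE α γ).trans ((McE α γ).symm h3')
          (Mc_md_edge α γ (α.iseqv.trans (α.iseqv.symm h1') h1))) h2
    · -- (mid/bot) top (mid/bot)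
      obtain ⟨m, h1, h2⟩ := h
      obtain ⟨m2, h1', h2'⟩ := h'
      exact (McE α γ).trans ((McE α γ).symm h2)
        ((McE α γ).trans (Mc_md_edge α γ (α.iseqv.trans (α.iseqv.symm h1) h1')) h2')
    · -- (mid/bot) (mid/bot) top
      obtain ⟨m, h1, h2⟩ := h'
      exact ⟨m, h1, (McE α γ).trans h2 ((McE α γ).symm h)⟩
    · -- all mid/bot
      exact (McE α γ).trans h h'

lemma graphRel_le_Drel (α γ : PM n) (x y : W n) (h : graphRel α γ x y) : Drel α γ x y := by
  rcases h with ⟨u, v, h, rfl, rfl⟩ | ⟨u, v, h, rfl, rfl⟩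
  · rcases u with i | m <;> rcases v with j | m'
    · exact Or.inl h
    · exact ⟨m', h, (McE α γ).refl _⟩
    · exact ⟨m, α.iseqv.symm h, (McE α γ).refl _⟩
    · exact Mc_md_edge α γ h
  · rcases u with i | m <;> rcases v with j | m' <;>
      exact .rel _ _ (Or.inr ⟨_, _, h, rfl, rfl⟩)

lemma Drel_le_conn (α γ : PM n) (x y : W n) (h : Drel α γ x y) : conn α γ x y := by
  have edge : ∀ (i : Fin n) (m : Fin n), α.r (.inl i) (.inr m) → conn α γ (.inl i) (md m) :=
    fun i m h => .rel _ _ (Or.inl ⟨.inl i, .inr m, h, rfl, rfl⟩)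
  rcases x with i | w <;> rcases y with j | w'
  · rcases h with h | ⟨m, m', h1, h2, h3⟩
    · exact .rel _ _ (Or.inl ⟨.inl i, .inl j, h, rfl, rfl⟩)
    · exact .trans _ _ _ (edge i m h1)
        (.trans _ _ _ (Mc_le_conn α γ h3) (.symm _ _ (edge j m' h2)))
  · obtain ⟨m, h1, h2⟩ := h
    exact .trans _ _ _ (edge i m h1) (Mc_le_conn α γ h2)
  · obtain ⟨m, h1, h2⟩ := h
    exact .symm _ _ (.trans _ _ _ (edge j m h1) (Mc_le_conn α γ h2))
  · exact Mc_le_conn α γ h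

lemma conn_iff_Drel (α γ : PM n) (x y : W n) : conn α γ x y ↔ Drel α γ x y :=
  ⟨fun h => eqvGen_le (Drel_equiv α γ) (graphRel_le_Drel α γ) h, Drel_le_conn α γ x y⟩

/-- Upper-upper analysis of the product. -/
lemma pmul_upper_iff (α γ : PM n) (i j : Fin n) :
    (pmul α γ).r (Sum.inl i) (Sum.inl j) ↔
      (α.r (.inl i) (.inl j) ∨
        ∃ m m', α.r (.inl i) (.inr m) ∧ α.r (.inl j) (.inr m') ∧ Mc α γ (md m) (md m')) :=
  conn_iff_Drel α γ (Sum.inl i) (Sum.inl j)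

/-- Upper-lower analysis of the product. -/
lemma pmul_cross_iff (α γ : PM n) (i k : Fin n) :
    (pmul α γ).r (Sum.inl i) (Sum.inr k) ↔
      ∃ m, α.r (.inl i) (.inr m) ∧ Mc α γ (md m) (bt k) :=
  conn_iff_Drel α γ (Sum.inl i) (Sum.inr (Sum.inr k))

/-- Lower-lower analysis of the product. -/
lemma pmul_lower_iff (α γ : PM n) (k k' : Fin n) :
    (pmul α γ).r (Sum.inr k) (Sum.inr k') ↔ Mc α γ (bt k) (bt k') :=
  conn_iff_Drel α γ (Sum.inr (Sum.inr k)) (Sum.inr (Sum.inr k'))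

/-- Upper edges survive right multiplication. -/
lemma pmul_upper_of_upper (α γ : PM n) {i j : Fin n} (h : α.r (.inl i) (.inl j)) :
    (pmul α γ).r (Sum.inl i) (Sum.inl j) :=
  (pmul_upper_iff α γ i j).mpr (Or.inl h)

/-- A transversal upper of the product is a transversal upper of the left factor. -/
lemma trans_upper_of_pmul (α γ : PM n) {i k : Fin n}
    (h : (pmul α γ).r (Sum.inl i) (Sum.inr k)) : ∃ m, α.r (.inl i) (.inr m) := by
  obtain ⟨m, h1, _⟩ := (pmul_cross_iff α γ i k).mp h
  exact ⟨m, h1⟩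




open Relation Sum

variable {n : ℕ}

lemma mk_eq_iff {X : Type*} {s : Setoid X} {a b : X} :
    Quotient.mk s a = Quotient.mk s b ↔ s.r a b :=
  ⟨fun h => Quotient.eq''.mp h, fun h => Quotient.sound h⟩

/-- The type of transversal blocks of a partition. -/
def Tcl (α : PM n) : Type _ :=
  {c : Quotient α //
    (∃ i : Fin n, Quotient.mk α (Sum.inl i) = c) ∧ ∃ i : Fin n, Quotient.mk α (Sum.inr i) = c}

instance (α : PM n) : Finite (Tcl α) := by
  unfold Tcl; infer_instance

lemma rnk_eq_card (α : PM n) : rnk α = Nat.card (Tcl α) := rfl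

/-- The choice-based injection from transversal blocks of `αγ` to those of `α`. -/
noncomputable def tclMap (α γ : PM n) (C : Tcl (pmul α γ)) : Tcl α := by
  refine ⟨Quotient.mk α (Sum.inl C.2.1.choose), ⟨C.2.1.choose, rfl⟩, ?_⟩
  have h1 : Quotient.mk (pmul α γ) (Sum.inl C.2.1.choose) = C.1 := C.2.1.choose_spec
  have h2 : Quotient.mk (pmul α γ) (Sum.inr C.2.2.choose) = C.1 := C.2.2.choose_spec
  have hcr : (pmul α γ).r (Sum.inl C.2.1.choose) (Sum.inr C.2.2.choose) :=
    mk_eq_iff.mp (h1.trans h2.symm)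
  obtain ⟨m, hm⟩ := trans_upper_of_pmul α γ hcr
  exact ⟨m, mk_eq_iff.mpr (α.iseqv.symm hm)⟩

lemma tclMap_spec (α γ : PM n) (C : Tcl (pmul α γ)) :
    Quotient.mk (pmul α γ) (Sum.inl C.2.1.choose) = C.1 ∧
      (tclMap α γ C).1 = Quotient.mk α (Sum.inl C.2.1.choose) :=
  ⟨C.2.1.choose_spec, rfl⟩

lemma tclMap_inj (α γ : PM n) : Function.Injective (tclMap α γ) := by
  intro C C' h
  have h1 : Quotient.mk α (Sum.inl C.2.1.choose) = Quotient.mk α (Sum.inl C'.2.1.choose) := by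
    have := congrArg Subtype.val h
    simpa [tclMap] using this
  have hup : α.r (Sum.inl C.2.1.choose) (Sum.inl C'.2.1.choose) := mk_eq_iff.mp h1
  have hc : (pmul α γ).r (Sum.inl C.2.1.choose) (Sum.inl C'.2.1.choose) :=
    pmul_upper_of_upper α γ hup
  have : C.1 = C'.1 := by
    rw [← C.2.1.choose_spec, ← C'.2.1.choose_spec]
    exact mk_eq_iff.mpr hc
  exact Subtype.ext this

lemma rnk_pmul_le_left (α γ : PM n) : rnk (pmul α γ) ≤ rnk α :=
  Nat.card_le_card_of_injective _ (tclMap_inj α γ)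

/-- The canonical equivalence between blocks of `flipP α` and blocks of `α`. -/
def flipQuot (α : PM n) : Quotient (flipP α) ≃ Quotient α where
  toFun := Quotient.lift (fun x => Quotient.mk α (flV x)) (fun a b h => mk_eq_iff.mpr h)
  invFun := Quotient.lift (fun x => Quotient.mk (flipP α) (flV x))
    (fun a b h => mk_eq_iff.mpr (by simpa using h))
  left_inv := fun c => Quotient.inductionOn c (fun x => by simp)
  right_inv := fun c => Quotient.inductionOn c (fun x => by simp)

@[simp] lemma flipQuot_mk (α : PM n) (x : V n) :
    flipQuot α (Quotient.mk (flipP α) x) = Quotient.mk α (flV x) := rfl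

/-- Rank is invariant under reflection. -/
lemma rnk_flip (α : PM n) : rnk (flipP α) = rnk α := by
  refine Nat.card_congr (Equiv.subtypeEquiv (flipQuot α) ?_)
  rintro c
  induction c using Quotient.inductionOn with
  | h x =>
    constructor
    · rintro ⟨⟨i, hi⟩, ⟨j, hj⟩⟩
      refine ⟨⟨j, ?_⟩, ⟨i, ?_⟩⟩
      · rw [← hj]; rfl
      · rw [← hi]; rfl
    · rintro ⟨⟨i, hi⟩, ⟨j, hj⟩⟩
      constructor
      · refine ⟨j, ?_⟩
        apply (flipQuot α).injective
        rw [← hj]; rfl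
      · refine ⟨i, ?_⟩
        apply (flipQuot α).injective
        rw [← hi]; rfl

lemma rnk_pmul_le_right (α γ : PM n) : rnk (pmul α γ) ≤ rnk γ := by
  have h1 : rnk (pmul α γ) = rnk (flipP (pmul α γ)) := (rnk_flip _).symm
  rw [h1, ← pmul_flip]
  exact (rnk_pmul_le_left (flipP γ) (flipP α)).trans (le_of_eq (rnk_flip γ))

lemma greenR_factor {x y : PM n} (h : greenR (pmul (n := n)) x y) : ∃ d, pmul x d = y := by
  have : y ∈ Set.range (pmul y) := ⟨oneP, pmul_one y⟩
  rw [← h] at this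
  exact this

lemma greenL_factor {x y : PM n} (h : greenL (pmul (n := n)) x y) : ∃ d, pmul d x = y := by
  have : y ∈ Set.range (fun a => pmul a y) := ⟨oneP, one_pmul y⟩
  rw [greenL] at h
  rw [← h] at this
  exact this

lemma greenL_rmul {x y : PM n} (h : greenL (pmul (n := n)) x y) (γ : PM n) :
    greenL (pmul (n := n)) (pmul x γ) (pmul y γ) := by
  unfold greenL at h ⊢
  have e1 : (fun a => pmul a (pmul x γ)) = (fun b => pmul b γ) ∘ (fun a => pmul a x) := by
    funext a; exact (pmul_assoc a x γ).symm
  have e2 : (fun a => pmul a (pmul y γ)) = (fun b => pmul b γ) ∘ (fun a => pmul a y) := by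
    funext a; exact (pmul_assoc a y γ).symm
  rw [e1, e2, Set.range_comp, Set.range_comp, h]

lemma greenR_lmul {x y : PM n} (h : greenR (pmul (n := n)) x y) (γ : PM n) :
    greenR (pmul (n := n)) (pmul γ x) (pmul γ y) := by
  unfold greenR at h ⊢
  have e1 : pmul (pmul γ x) = pmul γ ∘ pmul x := by
    funext a; exact pmul_assoc γ x a
  have e2 : pmul (pmul γ y) = pmul γ ∘ pmul y := by
    funext a; exact pmul_assoc γ y a
  rw [e1, e2, Set.range_comp, Set.range_comp, h]

lemma rnk_eq_of_greenL {x y : PM n} (h : greenL (pmul (n := n)) x y) : rnk x = rnk y := by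
  obtain ⟨d, hd⟩ := greenL_factor h
  obtain ⟨d', hd'⟩ := greenL_factor (show greenL (pmul (n := n)) y x from h.symm)
  exact le_antisymm (hd' ▸ rnk_pmul_le_right d' y) (hd ▸ rnk_pmul_le_right d x)

lemma rnk_eq_of_greenR {x y : PM n} (h : greenR (pmul (n := n)) x y) : rnk x = rnk y := by
  obtain ⟨d, hd⟩ := greenR_factor h
  obtain ⟨d', hd'⟩ := greenR_factor (show greenR (pmul (n := n)) y x from h.symm)
  exact le_antisymm (hd' ▸ rnk_pmul_le_left y d') (hd ▸ rnk_pmul_le_left x d)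




open Relation Sum

variable {n : ℕ}

/-- Flipping interchanges the Green relations `L` and `R`. -/
lemma greenL_iff_flip (x y : PM n) :
    greenL (pmul (n := n)) x y ↔ greenR (pmul (n := n)) (flipP x) (flipP y) := by
  have key : ∀ z : PM n, Set.range (pmul (flipP z)) =
      flipP '' Set.range (fun a => pmul a z) := by
    intro z
    ext w
    constructor
    · rintro ⟨a, rfl⟩
      refine ⟨pmul (flipP a) z, ⟨flipP a, rfl⟩, ?_⟩
      rw [← pmul_flip, flip_flip]
    · rintro ⟨w', ⟨a, rfl⟩, rfl⟩
      exact ⟨flipP a, (pmul_flip a z)⟩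
  constructor
  · intro h
    unfold greenR
    rw [key x, key y, h]
  · intro h
    unfold greenL
    unfold greenR at h
    rw [key x, key y] at h
    have hinj : Function.Injective (flipP (n := n)) := by
      intro a b hab
      have := congrArg flipP hab; simpa using this
    exact (Set.image_eq_image hinj).mp h

lemma greenR_iff_flip (x y : PM n) :
    greenR (pmul (n := n)) x y ↔ greenL (pmul (n := n)) (flipP x) (flipP y) := by
  rw [greenL_iff_flip, flip_flip, flip_flip]

/-- Lower edges survive left multiplication. -/
lemma pmul_lower_of_lower (γ α : PM n) {i j : Fin n} (h : α.r (.inr i) (.inr j)) :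
    (pmul γ α).r (Sum.inr i) (Sum.inr j) := by
  have := pmul_upper_of_upper (flipP α) (flipP γ) (i := i) (j := j) (by simpa [flV] using h)
  rw [pmul_flip] at this
  simpa [flV] using this

/-- A transversal lower of a product is a transversal lower of the right factor. -/
lemma trans_lower_of_pmul (γ α : PM n) {i k : Fin n}
    (h : (pmul γ α).r (Sum.inl i) (Sum.inr k)) : ∃ m, α.r (.inl m) (.inr k) := by
  have h' : (pmul (flipP α) (flipP γ)).r (Sum.inl k) (Sum.inr i) := by
    rw [pmul_flip]
    change (pmul γ α).r (flV (Sum.inl k)) (flV (Sum.inr i))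
    exact (pmul γ α).iseqv.symm h
  obtain ⟨m, hm⟩ := trans_upper_of_pmul (flipP α) (flipP γ) h'
  exact ⟨m, α.iseqv.symm (by simpa [flV] using hm)⟩

section RankPattern

variable {α γ : PM n} (hr : rnk (pmul α γ) = rnk α)

lemma tclMap_bij (hr : rnk (pmul α γ) = rnk α) : Function.Bijective (tclMap α γ) :=
  (Nat.bijective_iff_injective_and_card _).mpr ⟨tclMap_inj α γ, hr⟩

/-- Under rank preservation, every transversal upper of `α` remains one for `αγ`. -/
lemma transUpper_of_rank (hr : rnk (pmul α γ) = rnk α) {i m : Fin n}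
    (h : α.r (.inl i) (.inr m)) : ∃ k, (pmul α γ).r (Sum.inl i) (Sum.inr k) := by
  set T : Tcl α := ⟨Quotient.mk α (Sum.inl i), ⟨i, rfl⟩,
    ⟨m, mk_eq_iff.mpr (α.iseqv.symm h)⟩⟩ with hT
  obtain ⟨C, hC⟩ := (tclMap_bij hr).surjective T
  have h1 : Quotient.mk α (Sum.inl C.2.1.choose) = Quotient.mk α (Sum.inl i) := by
    have := congrArg Subtype.val hC
    simpa [tclMap, hT] using this
  have hup : α.r (Sum.inl i) (Sum.inl C.2.1.choose) := α.iseqv.symm (mk_eq_iff.mp h1)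
  have hc1 : (pmul α γ).r (Sum.inl i) (Sum.inl C.2.1.choose) := pmul_upper_of_upper α γ hup
  obtain ⟨j, hj⟩ := C.2.2
  have hc2 : (pmul α γ).r (Sum.inl C.2.1.choose) (Sum.inr j) :=
    mk_eq_iff.mp (C.2.1.choose_spec.trans hj.symm)
  exact ⟨j, (pmul α γ).iseqv.trans hc1 hc2⟩

/-- The reverse map from transversal blocks of `α` to those of `αγ`. -/
noncomputable def tclInv (hr : rnk (pmul α γ) = rnk α) (T : Tcl α) : Tcl (pmul α γ) := by
  refine ⟨Quotient.mk (pmul α γ) (Sum.inl T.2.1.choose), ⟨T.2.1.choose, rfl⟩, ?_⟩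
  obtain ⟨m, hm⟩ := T.2.2
  have hcross : α.r (.inl T.2.1.choose) (.inr m) :=
    mk_eq_iff.mp (T.2.1.choose_spec.trans hm.symm)
  obtain ⟨k, hk⟩ := transUpper_of_rank hr hcross
  exact ⟨k, mk_eq_iff.mpr ((pmul α γ).iseqv.symm hk)⟩

lemma tclInv_tclMap (hr : rnk (pmul α γ) = rnk α) (C : Tcl (pmul α γ)) :
    tclInv hr (tclMap α γ C) = C := by
  apply Subtype.ext
  set T := tclMap α γ C with hT
  have h1 : Quotient.mk α (Sum.inl T.2.1.choose) = T.1 := T.2.1.choose_spec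
  have h2 : T.1 = Quotient.mk α (Sum.inl C.2.1.choose) := rfl
  have hup : α.r (Sum.inl T.2.1.choose) (Sum.inl C.2.1.choose) :=
    mk_eq_iff.mp (h1.trans h2)
  have hc : (pmul α γ).r (Sum.inl T.2.1.choose) (Sum.inl C.2.1.choose) :=
    pmul_upper_of_upper α γ hup
  calc (tclInv hr T).1 = Quotient.mk (pmul α γ) (Sum.inl T.2.1.choose) := rfl
    _ = Quotient.mk (pmul α γ) (Sum.inl C.2.1.choose) := mk_eq_iff.mpr hc
    _ = C.1 := C.2.1.choose_spec

lemma tclInv_inj (hr : rnk (pmul α γ) = rnk α) : Function.Injective (tclInv hr) := by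
  intro T T' h
  obtain ⟨C, rfl⟩ := (tclMap_bij hr).surjective T
  obtain ⟨C', rfl⟩ := (tclMap_bij hr).surjective T'
  rw [tclInv_tclMap, tclInv_tclMap] at h
  rw [h]

/-- Under rank preservation, the upper pattern of `αγ` coincides with that of `α`. -/
lemma upper_iff_of_rank (hr : rnk (pmul α γ) = rnk α) (i j : Fin n) :
    (pmul α γ).r (Sum.inl i) (Sum.inl j) ↔ α.r (.inl i) (.inl j) := by
  constructor
  · intro h
    rcases (pmul_upper_iff α γ i j).mp h with h' | ⟨m, m', h1, h2, _⟩
    · exact h'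
    · -- both are transversal uppers of α
      set Ti : Tcl α := ⟨Quotient.mk α (Sum.inl i), ⟨i, rfl⟩,
        ⟨m, mk_eq_iff.mpr (α.iseqv.symm h1)⟩⟩ with hTi
      set Tj : Tcl α := ⟨Quotient.mk α (Sum.inl j), ⟨j, rfl⟩,
        ⟨m', mk_eq_iff.mpr (α.iseqv.symm h2)⟩⟩ with hTj
      have key : ∀ (T : Tcl α) (i₀ : Fin n), T.1 = Quotient.mk α (Sum.inl i₀) →
          (tclInv hr T).1 = Quotient.mk (pmul α γ) (Sum.inl i₀) := by
        intro T i₀ hTi₀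
        have h1 : Quotient.mk α (Sum.inl T.2.1.choose) = Quotient.mk α (Sum.inl i₀) :=
          T.2.1.choose_spec.trans hTi₀
        have hup : α.r (Sum.inl T.2.1.choose) (Sum.inl i₀) := mk_eq_iff.mp h1
        calc (tclInv hr T).1 = Quotient.mk (pmul α γ) (Sum.inl T.2.1.choose) := rfl
          _ = Quotient.mk (pmul α γ) (Sum.inl i₀) :=
            mk_eq_iff.mpr (pmul_upper_of_upper α γ hup)
      have heq : tclInv hr Ti = tclInv hr Tj := by
        apply Subtype.ext
        rw [key Ti i rfl, key Tj j rfl]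
        exact mk_eq_iff.mpr h
      have := tclInv_inj hr heq
      have : Ti.1 = Tj.1 := congrArg Subtype.val this
      exact mk_eq_iff.mp this
  · exact pmul_upper_of_upper α γ

lemma transUpper_iff_of_rank (hr : rnk (pmul α γ) = rnk α) (i : Fin n) :
    (∃ k, (pmul α γ).r (Sum.inl i) (Sum.inr k)) ↔ ∃ m, α.r (.inl i) (.inr m) := by
  constructor
  · rintro ⟨k, hk⟩
    exact trans_upper_of_pmul α γ hk
  · rintro ⟨m, hm⟩
    exact transUpper_of_rank hr hm

end RankPattern




open Relation Sum

variable {n : ℕ}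

section Stability

variable {α γ : PM n}

/-- The relation underlying the witness `δ` with `(αγ)δ = α`. -/
def dRel (c α : PM n) : V n → V n → Prop
  | Sum.inl i, Sum.inl j => c.r (.inr i) (.inr j)
  | Sum.inl i, Sum.inr j => ∃ k, c.r (.inl k) (.inr i) ∧ α.r (.inl k) (.inr j)
  | Sum.inr i, Sum.inl j => ∃ k, c.r (.inl k) (.inr j) ∧ α.r (.inl k) (.inr i)
  | Sum.inr i, Sum.inr j => α.r (.inr i) (.inr j)

variable (hU : ∀ i j, (pmul α γ).r (Sum.inl i) (Sum.inl j) ↔ α.r (.inl i) (.inl j))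

lemma dRel_equiv (hU : ∀ i j, (pmul α γ).r (Sum.inl i) (Sum.inl j) ↔ α.r (.inl i) (.inl j)) :
    Equivalence (dRel (pmul α γ) α) := by
  set c := pmul α γ with hc
  constructor
  · rintro (i | i)
    · exact c.iseqv.refl _
    · exact α.iseqv.refl _
  · rintro (i | i) (j | j) h
    · exact c.iseqv.symm h
    · obtain ⟨k, h1, h2⟩ := h; exact ⟨k, h1, h2⟩
    · obtain ⟨k, h1, h2⟩ := h; exact ⟨k, h1, h2⟩
    · exact α.iseqv.symm h
  · rintro (i | i) (j | j) (k | k) h h'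
    · exact c.iseqv.trans h h'
    · obtain ⟨l, h1, h2⟩ := h'
      exact ⟨l, c.iseqv.trans h1 (c.iseqv.symm h), h2⟩
    · obtain ⟨l, h1, h2⟩ := h
      obtain ⟨l', h1', h2'⟩ := h'
      have hup : α.r (.inl l) (.inl l') := α.iseqv.trans h2 (α.iseqv.symm h2')
      have hcup : c.r (.inl l) (.inl l') := (hU l l').mpr hup
      exact c.iseqv.trans (c.iseqv.symm h1) (c.iseqv.trans hcup h1')
    · obtain ⟨l, h1, h2⟩ := h
      exact ⟨l, h1, α.iseqv.trans h2 h'⟩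
    · obtain ⟨l, h1, h2⟩ := h
      exact ⟨l, c.iseqv.trans h1 h', h2⟩
    · obtain ⟨l, h1, h2⟩ := h
      obtain ⟨l', h1', h2'⟩ := h'
      have hcup : c.r (.inl l) (.inl l') := c.iseqv.trans h1 (c.iseqv.symm h1')
      have hup : α.r (.inl l) (.inl l') := (hU l l').mp hcup
      exact α.iseqv.trans (α.iseqv.symm h2) (α.iseqv.trans hup h2')
    · obtain ⟨l, h1, h2⟩ := h'
      exact ⟨l, h1, α.iseqv.trans h2 (α.iseqv.symm h)⟩
    · exact α.iseqv.trans h h'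

/-- The witness partition `δ`. -/
noncomputable def deltaP (α γ : PM n)
    (hU : ∀ i j, (pmul α γ).r (Sum.inl i) (Sum.inl j) ↔ α.r (.inl i) (.inl j)) : PM n :=
  ⟨dRel (pmul α γ) α, dRel_equiv hU⟩

/-- The invariant for middle-bottom connectivity in `Γ(αγ, δ)`. -/
def R1 (c α : PM n) : W n → W n → Prop
  | Sum.inl i, Sum.inl j => i = j
  | Sum.inl _, Sum.inr _ => False
  | Sum.inr _, Sum.inl _ => False
  | Sum.inr w, Sum.inr w' => dRel c α w w'

lemma R1_equiv (hU : ∀ i j, (pmul α γ).r (Sum.inl i) (Sum.inl j) ↔ α.r (.inl i) (.inl j)) :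
    Equivalence (R1 (pmul α γ) α) := by
  have hd := dRel_equiv hU
  constructor
  · rintro (i | w)
    · rfl
    · exact hd.refl w
  · rintro (i | w) (j | w') h
    · exact h.symm
    · exact h.elim
    · exact h.elim
    · exact hd.symm h
  · rintro (i | w) (j | w') (k | w'') h h'
    · exact h.trans h'
    · exact h'.elim
    · exact h.elim
    · exact h.elim
    · exact h.elim
    · exact h.elim
    · exact h'.elim
    · exact hd.trans h h'

lemma Mc_deltaP_le_R1 (hU : ∀ i j, (pmul α γ).r (Sum.inl i) (Sum.inl j) ↔ α.r (.inl i) (.inl j))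
    {x y : W n} (h : Mc (pmul α γ) (deltaP α γ hU) x y) : R1 (pmul α γ) α x y := by
  refine eqvGen_le (R1_equiv hU) ?_ h
  rintro a b (⟨m, m', hm, rfl, rfl⟩ | ⟨u, v, huv, rfl, rfl⟩)
  · exact hm
  · rcases u with i | i <;> rcases v with j | j <;> exact huv

/-- The stability identity: if `rnk (αγ) = rnk α` then `(αγ)δ = α`. -/
lemma pmul_deltaP (hr : rnk (pmul α γ) = rnk α) :
    pmul (pmul α γ) (deltaP α γ (upper_iff_of_rank hr)) = α := by
  set c := pmul α γ with hc
  set hU := upper_iff_of_rank hr with hhU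
  set δ := deltaP α γ hU with hδ
  have hMc : ∀ {x y : W n}, Mc c δ x y → R1 c α x y := fun h => Mc_deltaP_le_R1 hU h
  apply Setoid.ext
  rintro (i | i) (j | j)
  · -- upper-upper
    rw [show (pmul c δ).r (Sum.inl i) (Sum.inl j) ↔ _ from pmul_upper_iff c δ i j]
    constructor
    · rintro (h | ⟨m, m', h1, h2, h3⟩)
      · exact (hU i j).mp h
      · have : dRel c α (Sum.inl m) (Sum.inl m') := hMc h3
        have hcc : c.r (.inr m) (.inr m') := this
        have : c.r (Sum.inl i) (Sum.inl j) :=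
          c.iseqv.trans h1 (c.iseqv.trans hcc (c.iseqv.symm h2))
        exact (hU i j).mp this
    · intro h
      exact Or.inl ((hU i j).mpr h)
  · -- upper-lower
    rw [show (pmul c δ).r (Sum.inl i) (Sum.inr j) ↔ _ from pmul_cross_iff c δ i j]
    constructor
    · rintro ⟨m, h1, h2⟩
      have : dRel c α (Sum.inl m) (Sum.inr j) := hMc h2
      obtain ⟨l, hl1, hl2⟩ := this
      have hcij : c.r (Sum.inl i) (Sum.inl l) := c.iseqv.trans h1 (c.iseqv.symm hl1)
      exact α.iseqv.trans ((hU i l).mp hcij) hl2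
    · intro h
      obtain ⟨k, hk⟩ := transUpper_of_rank hr h
      refine ⟨k, hk, ?_⟩
      refine Relation.EqvGen.rel _ _ (Or.inr ⟨Sum.inl k, Sum.inr j, ?_, rfl, rfl⟩)
      exact (⟨i, hk, h⟩ : dRel c α (Sum.inl k) (Sum.inr j))
  · -- lower-upper: use symmetry
    rw [show (pmul c δ).r (Sum.inr i) (Sum.inl j) ↔ (pmul c δ).r (Sum.inl j) (Sum.inr i) from
      ⟨fun h => (pmul c δ).iseqv.symm h, fun h => (pmul c δ).iseqv.symm h⟩]
    rw [show α.r (Sum.inr i) (Sum.inl j) ↔ α.r (Sum.inl j) (Sum.inr i) from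
      ⟨fun h => α.iseqv.symm h, fun h => α.iseqv.symm h⟩]
    rw [show (pmul c δ).r (Sum.inl j) (Sum.inr i) ↔ _ from pmul_cross_iff c δ j i]
    constructor
    · rintro ⟨m, h1, h2⟩
      have : dRel c α (Sum.inl m) (Sum.inr i) := hMc h2
      obtain ⟨l, hl1, hl2⟩ := this
      have hcij : c.r (Sum.inl j) (Sum.inl l) := c.iseqv.trans h1 (c.iseqv.symm hl1)
      exact α.iseqv.trans ((hU j l).mp hcij) hl2
    · intro h
      obtain ⟨k, hk⟩ := transUpper_of_rank hr h
      refine ⟨k, hk, ?_⟩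
      refine Relation.EqvGen.rel _ _ (Or.inr ⟨Sum.inl k, Sum.inr i, ?_, rfl, rfl⟩)
      exact (⟨j, hk, h⟩ : dRel c α (Sum.inl k) (Sum.inr i))
  · -- lower-lower
    rw [show (pmul c δ).r (Sum.inr i) (Sum.inr j) ↔ _ from pmul_lower_iff c δ i j]
    constructor
    · intro h
      exact hMc h
    · intro h
      refine Relation.EqvGen.rel _ _ (Or.inr ⟨Sum.inr i, Sum.inr j, ?_, rfl, rfl⟩)
      exact (h : dRel c α (Sum.inr i) (Sum.inr j))

/-- Stability: if right multiplication preserves the rank then it preserves the `R`-class. -/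
lemma greenR_of_rank (hr : rnk (pmul α γ) = rnk α) :
    greenR (pmul (n := n)) α (pmul α γ) := by
  unfold greenR
  apply Set.eq_of_subset_of_subset
  · rintro _ ⟨z, rfl⟩
    refine ⟨pmul (deltaP α γ (upper_iff_of_rank hr)) z, ?_⟩
    rw [← pmul_assoc, pmul_deltaP hr]
  · rintro _ ⟨z, rfl⟩
    exact ⟨pmul γ z, (pmul_assoc α γ z).symm⟩

end Stability




open Relation Sum

variable {n q : ℕ}

/-- Pattern invariance along Green's `R`. -/
lemma patt_of_greenR {x y : PM n} (h : greenR (pmul (n := n)) x y) :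
    (∀ i j, x.r (.inl i) (.inl j) ↔ y.r (.inl i) (.inl j)) ∧
      (∀ i, (∃ k, x.r (.inl i) (.inr k)) ↔ ∃ k, y.r (.inl i) (.inr k)) := by
  obtain ⟨d, hd⟩ := greenR_factor h
  obtain ⟨d', hd'⟩ := greenR_factor (show greenR (pmul (n := n)) y x from h.symm)
  constructor
  · intro i j
    constructor
    · intro hxy; rw [← hd]; exact pmul_upper_of_upper x d hxy
    · intro hxy; rw [← hd']; exact pmul_upper_of_upper y d' hxy
  · intro i
    constructor
    · rintro ⟨k, hk⟩
      rw [← hd'] at hk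
      obtain ⟨m, hm⟩ := trans_upper_of_pmul y d' hk
      exact ⟨m, hm⟩
    · rintro ⟨k, hk⟩
      rw [← hd] at hk
      obtain ⟨m, hm⟩ := trans_upper_of_pmul x d hk
      exact ⟨m, hm⟩

/-- Pattern invariance along Green's `L`. -/
lemma patt_of_greenL {x y : PM n} (h : greenL (pmul (n := n)) x y) :
    (∀ i j, x.r (.inr i) (.inr j) ↔ y.r (.inr i) (.inr j)) ∧
      (∀ k, (∃ i, x.r (.inl i) (.inr k)) ↔ ∃ i, y.r (.inl i) (.inr k)) := by
  obtain ⟨d, hd⟩ := greenL_factor h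
  obtain ⟨d', hd'⟩ := greenL_factor (show greenL (pmul (n := n)) y x from h.symm)
  constructor
  · intro i j
    constructor
    · intro hxy; rw [← hd]; exact pmul_lower_of_lower d x hxy
    · intro hxy; rw [← hd']; exact pmul_lower_of_lower d' y hxy
  · intro k
    constructor
    · rintro ⟨i, hi⟩
      rw [← hd'] at hi
      obtain ⟨m, hm⟩ := trans_lower_of_pmul d' y hi
      exact ⟨m, hm⟩
    · rintro ⟨i, hi⟩
      rw [← hd] at hi
      obtain ⟨m, hm⟩ := trans_lower_of_pmul d x hi
      exact ⟨m, hm⟩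

/-- A base `pd`-witness for an `H`-related pair of rank-`q` partitions. -/
lemma exists_base_witness {α β : PM n} (hα : rnk α = q) (hβ : rnk β = q)
    (hH : greenH (pmul (n := n)) α β) :
    ∃ (a b : Fin q → Fin n) (π : Equiv.Perm (Fin q)),
      (∀ s t, α.r (.inl (a s)) (.inl (a t)) → s = t) ∧
      (∀ s, α.r (.inl (a s)) (.inr (b s))) ∧
      (∀ s, β.r (.inl (a s)) (.inr (b (π s)))) := by
  have pR := patt_of_greenR hH.1
  have pL := patt_of_greenL hH.2
  have hcard : Nat.card (Tcl α) = q := hα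
  have e : Tcl α ≃ Fin q := hcard ▸ Finite.equivFin (Tcl α)
  set a : Fin q → Fin n := fun s => ((e.symm s).2.1).choose with ha
  set b : Fin q → Fin n := fun s => ((e.symm s).2.2).choose with hb
  have haspec : ∀ s, Quotient.mk α (Sum.inl (a s)) = (e.symm s).1 :=
    fun s => ((e.symm s).2.1).choose_spec
  have hbspec : ∀ s, Quotient.mk α (Sum.inr (b s)) = (e.symm s).1 :=
    fun s => ((e.symm s).2.2).choose_spec
  have hdist : ∀ s t, α.r (.inl (a s)) (.inl (a t)) → s = t := by
    intro s t h
    have : (e.symm s).1 = (e.symm t).1 := by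
      rw [← haspec s, ← haspec t]; exact mk_eq_iff.mpr h
    have : e.symm s = e.symm t := Subtype.ext this
    exact e.symm.injective this
  have hcross : ∀ s, α.r (.inl (a s)) (.inr (b s)) :=
    fun s => mk_eq_iff.mp ((haspec s).trans (hbspec s).symm)
  -- the β-side permutation
  have hβcross : ∀ s, ∃ k, β.r (.inl (a s)) (.inr k) :=
    fun s => (pR.2 (a s)).mp ⟨b s, hcross s⟩
  set k' : Fin q → Fin n := fun s => (hβcross s).choose with hk'
  have hk'spec : ∀ s, β.r (.inl (a s)) (.inr (k' s)) := fun s => (hβcross s).choose_spec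
  have hαk' : ∀ s, ∃ i, α.r (.inl i) (.inr (k' s)) :=
    fun s => (pL.2 (k' s)).mpr ⟨a s, hk'spec s⟩
  set T' : Fin q → Tcl α := fun s =>
    ⟨Quotient.mk α (Sum.inr (k' s)), ⟨(hαk' s).choose,
      mk_eq_iff.mpr ((hαk' s).choose_spec)⟩, ⟨k' s, rfl⟩⟩ with hT'
  set f : Fin q → Fin q := fun s => e (T' s) with hf
  have hbf : ∀ s, α.r (.inr (b (f s))) (.inr (k' s)) := by
    intro s
    have h1 : Quotient.mk α (Sum.inr (b (f s))) = (e.symm (f s)).1 := hbspec (f s)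
    have h2 : (e.symm (f s)) = T' s := by rw [hf]; exact e.symm_apply_apply _
    rw [h2] at h1
    exact mk_eq_iff.mp h1
  have hβf : ∀ s, β.r (.inl (a s)) (.inr (b (f s))) := by
    intro s
    have := (pL.1 (b (f s)) (k' s)).mp (hbf s)
    exact β.iseqv.trans (hk'spec s) (β.iseqv.symm this)
  have hfinj : Function.Injective f := by
    intro s t h
    have h1 : T' s = T' t := e.injective h
    have h2 : Quotient.mk α (Sum.inr (k' s)) = Quotient.mk α (Sum.inr (k' t)) :=
      congrArg Subtype.val h1
    have h3 : α.r (.inr (k' s)) (.inr (k' t)) := mk_eq_iff.mp h2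
    have h4 : β.r (.inr (k' s)) (.inr (k' t)) := (pL.1 _ _).mp h3
    have h5 : β.r (.inl (a s)) (.inl (a t)) :=
      β.iseqv.trans (hk'spec s) (β.iseqv.trans h4 (β.iseqv.symm (hk'spec t)))
    have h6 : α.r (.inl (a s)) (.inl (a t)) := (pR.1 _ _).mpr h5
    exact hdist s t h6
  set π : Equiv.Perm (Fin q) := Equiv.ofBijective f
    (Finite.injective_iff_bijective.mp hfinj) with hπ
  exact ⟨a, b, π, hdist, hcross, fun s => hβf s⟩

/-- Transfer of a `pd`-witness along right multiplication that preserves rank. -/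
lemma pdIn_transfer {α β γ : PM n} (hα : rnk α = q) (hH : greenH (pmul (n := n)) α β)
    (hr : rnk (pmul α γ) = q) (a b : Fin q → Fin n) (π : Equiv.Perm (Fin q))
    (h2 : ∀ s, α.r (.inl (a s)) (.inr (b s)))
    (h3 : ∀ s, β.r (.inl (a s)) (.inr (b (π s)))) :
    ∃ b' : Fin q → Fin n,
      (∀ s, (pmul α γ).r (Sum.inl (a s)) (Sum.inr (b' s))) ∧
      (∀ s, (pmul β γ).r (Sum.inl (a s)) (Sum.inr (b' (π s)))) := by
  have hrα : rnk (pmul α γ) = rnk α := hr.trans hα.symm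
  have pL := patt_of_greenL hH.2
  have hex : ∀ s, ∃ k, (pmul α γ).r (Sum.inl (a s)) (Sum.inr k) :=
    fun s => transUpper_of_rank hrα (h2 s)
  refine ⟨fun s => (hex s).choose, fun s => (hex s).choose_spec, ?_⟩
  intro s
  set k := (hex (π s)).choose with hk
  have hck : (pmul α γ).r (Sum.inl (a (π s))) (Sum.inr k) := (hex (π s)).choose_spec
  obtain ⟨m, hm1, hm2⟩ := (pmul_cross_iff α γ (a (π s)) k).mp hck
  -- m is in the lower part of the transversal of `a (π s)`
  have hαlow : α.r (.inr (b (π s))) (.inr m) :=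
    α.iseqv.trans (α.iseqv.symm (h2 (π s))) hm1
  have hβlow : β.r (.inr (b (π s))) (.inr m) := (pL.1 _ _).mp hαlow
  have hβm : β.r (.inl (a s)) (.inr m) := β.iseqv.trans (h3 s) hβlow
  have hMcβ : Mc β γ (md m) (bt k) := (Mc_congr (fun m m' => pL.1 m m')).mp hm2
  exact (pmul_cross_iff β γ (a s) k).mpr ⟨m, hβm, hMcβ⟩

/-- Any two `pd`-witnesses of the same pair are conjugate. -/
lemma witness_conj {c e : PM n} (hc : rnk c = q)
    (hup : ∀ i j, c.r (.inl i) (.inl j) ↔ e.r (.inl i) (.inl j))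
    (hlo : ∀ i j, c.r (.inr i) (.inr j) ↔ e.r (.inr i) (.inr j))
    (a1 b1 a2 b2 : Fin q → Fin n) (π1 π2 : Equiv.Perm (Fin q))
    (u1 : ∀ s t, c.r (.inl (a1 s)) (.inl (a1 t)) → s = t)
    (u2 : ∀ s, c.r (.inl (a1 s)) (.inr (b1 s)))
    (u3 : ∀ s, e.r (.inl (a1 s)) (.inr (b1 (π1 s))))
    (v1 : ∀ s t, c.r (.inl (a2 s)) (.inl (a2 t)) → s = t)
    (v2 : ∀ s, c.r (.inl (a2 s)) (.inr (b2 s)))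
    (v3 : ∀ s, e.r (.inl (a2 s)) (.inr (b2 (π2 s)))) :
    ∃ σ : Equiv.Perm (Fin q), ∀ s, σ (π2 s) = π1 (σ s) := by
  set h : Fin q → Tcl c := fun s =>
    ⟨Quotient.mk c (Sum.inl (a1 s)), ⟨a1 s, rfl⟩,
      ⟨b1 s, mk_eq_iff.mpr (c.iseqv.symm (u2 s))⟩⟩ with hh
  have hinj : Function.Injective h := by
    intro s t hst
    have := congrArg Subtype.val hst
    exact u1 s t (mk_eq_iff.mp this)
  have hbijh : Function.Bijective h := by
    refine (Nat.bijective_iff_injective_and_card h).mpr ⟨hinj, ?_⟩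
    rw [show Nat.card (Tcl c) = rnk c from rfl, hc]
    simp
  set C2 : Fin q → Tcl c := fun s =>
    ⟨Quotient.mk c (Sum.inl (a2 s)), ⟨a2 s, rfl⟩,
      ⟨b2 s, mk_eq_iff.mpr (c.iseqv.symm (v2 s))⟩⟩ with hC2
  set σf : Fin q → Fin q := fun s => (hbijh.surjective (C2 s)).choose with hσf
  have hσspec : ∀ s, c.r (.inl (a2 s)) (.inl (a1 (σf s))) := by
    intro s
    have : h (σf s) = C2 s := (hbijh.surjective (C2 s)).choose_spec
    have := congrArg Subtype.val this
    exact c.iseqv.symm (mk_eq_iff.mp this)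
  have hσinj : Function.Injective σf := by
    intro s t hst
    have h1 := hσspec s
    have h2 := hσspec t
    rw [hst] at h1
    exact v1 s t (c.iseqv.trans h1 (c.iseqv.symm h2))
  set σ : Equiv.Perm (Fin q) := Equiv.ofBijective σf
    (Finite.injective_iff_bijective.mp hσinj) with hσ
  refine ⟨σ, fun s => ?_⟩
  have step1 : e.r (.inl (a1 (σf s))) (.inr (b2 (π2 s))) :=
    e.iseqv.trans (e.iseqv.symm ((hup _ _).mp (hσspec s))) (v3 s)
  have step2 : e.r (.inr (b2 (π2 s))) (.inr (b1 (π1 (σf s)))) :=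
    e.iseqv.trans (e.iseqv.symm step1) (u3 (σf s))
  have step3 : c.r (.inr (b2 (π2 s))) (.inr (b1 (π1 (σf s)))) := (hlo _ _).mpr step2
  have step4 : c.r (.inl (a2 (π2 s))) (.inr (b1 (π1 (σf s)))) :=
    c.iseqv.trans (v2 (π2 s)) step3
  have step5 : c.r (.inl (a2 (π2 s))) (.inl (a1 (π1 (σf s)))) :=
    c.iseqv.trans step4 (c.iseqv.symm (u2 (π1 (σf s))))
  have step6 : c.r (.inl (a1 (σf (π2 s)))) (.inl (a1 (π1 (σf s)))) :=
    c.iseqv.trans (c.iseqv.symm (hσspec (π2 s))) step5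
  exact u1 _ _ step6




open Relation Sum

variable {n q : ℕ}

lemma greenH_flip {α β : PM n} (h : greenH (pmul (n := n)) α β) :
    greenH (pmul (n := n)) (flipP α) (flipP β) :=
  ⟨(greenL_iff_flip α β).mp h.2, (greenR_iff_flip α β).mp h.1⟩

lemma pdIn_flip_mem {α β : PM n} {N : Subgroup (Equiv.Perm (Fin q))}
    (h : pdIn q (· ∈ N) α β) : pdIn q (· ∈ N) (flipP α) (flipP β) := by
  obtain ⟨a, b, π, w1, w2, w3, hπ⟩ := h
  refine ⟨b, a, π⁻¹, ?_, ?_, ?_, inv_mem hπ⟩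
  · intro s t h
    have h' : α.r (.inr (b s)) (.inr (b t)) := h
    exact w1 s t (α.iseqv.trans (w2 s) (α.iseqv.trans h' (α.iseqv.symm (w2 t))))
  · intro s
    exact α.iseqv.symm (w2 s)
  · intro s
    show β.r (.inr (b s)) (.inl (a (π⁻¹ s)))
    have h3 := w3 (π⁻¹ s)
    rw [Equiv.Perm.inv_def, Equiv.apply_symm_apply] at h3
    exact β.iseqv.symm h3

lemma nuRel_flip_iff {α β : PM n} {N : Subgroup (Equiv.Perm (Fin q))} :
    nuRel q N α β ↔ nuRel q N (flipP α) (flipP β) := by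
  have fwd : ∀ x y : PM n, nuRel q N x y → nuRel q N (flipP x) (flipP y) := by
    rintro x y ⟨h1, h2, h3, h4⟩
    exact ⟨(rnk_flip x).trans h1, (rnk_flip y).trans h2, greenH_flip h3, pdIn_flip_mem h4⟩
  constructor
  · exact fwd α β
  · intro h
    have := fwd _ _ h
    rwa [flip_flip, flip_flip] at this

/-- The right-multiplication half of Statement 12. -/
lemma main_right {α β γ : PM n} (N : Subgroup (Equiv.Perm (Fin q))) (hN : N.Normal)
    (hα : rnk α = q) (hβ : rnk β = q) (hH : greenH (pmul (n := n)) α β) :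
    (rnk (pmul α γ) = q ↔ rnk (pmul β γ) = q) ∧
      (rnk (pmul α γ) = q → (nuRel q N α β ↔ nuRel q N (pmul α γ) (pmul β γ))) := by
  have hLγ : greenL (pmul (n := n)) (pmul α γ) (pmul β γ) := greenL_rmul hH.2 γ
  have hrEq : rnk (pmul α γ) = rnk (pmul β γ) := rnk_eq_of_greenL hLγ
  refine ⟨by rw [hrEq], ?_⟩
  intro h1
  have hβγ : rnk (pmul β γ) = q := hrEq.symm.trans h1
  have hRα : greenR (pmul (n := n)) α (pmul α γ) := greenR_of_rank (h1.trans hα.symm)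
  have hRβ : greenR (pmul (n := n)) β (pmul β γ) := greenR_of_rank (hβγ.trans hβ.symm)
  have hRγ : greenR (pmul (n := n)) (pmul α γ) (pmul β γ) := by
    have h1' := hRα; have h2' := hRβ; have h3' := hH.1
    unfold greenR at h1' h2' h3' ⊢
    rw [← h1', ← h2', h3']
  have hHγ : greenH (pmul (n := n)) (pmul α γ) (pmul β γ) := ⟨hRγ, hLγ⟩
  have hdistlift : ∀ (a : Fin q → Fin n),
      (∀ s t, α.r (.inl (a s)) (.inl (a t)) → s = t) →
      (∀ s t, (pmul α γ).r (Sum.inl (a s)) (Sum.inl (a t)) → s = t) := by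
    intro a w1 s t h
    exact w1 s t ((upper_iff_of_rank (h1.trans hα.symm) _ _).mp h)
  constructor
  · rintro ⟨-, -, -, a, b, π, w1, w2, w3, hπ⟩
    obtain ⟨b', t2, t3⟩ := pdIn_transfer hα hH h1 a b π w2 w3
    exact ⟨h1, hβγ, hHγ, a, b', π, hdistlift a w1, t2, t3, hπ⟩
  · rintro ⟨-, -, -, a2, b2, π2, v1, v2, v3, hπ2⟩
    obtain ⟨a1, b1, π1, u1, u2, u3⟩ := exists_base_witness hα hβ hH
    obtain ⟨b1', t2, t3⟩ := pdIn_transfer hα hH h1 a1 b1 π1 u2 u3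
    obtain ⟨σ, hσ⟩ := witness_conj h1 ((patt_of_greenR hRγ).1) ((patt_of_greenL hLγ).1)
      a1 b1' a2 b2 π1 π2 (hdistlift a1 u1) t2 t3 v1 v2 v3
    have hπ1 : π1 = σ * π2 * σ⁻¹ := by
      apply Equiv.ext; intro x
      have h := hσ (σ⁻¹ x)
      rw [Equiv.Perm.inv_def, Equiv.apply_symm_apply] at h
      simp only [Equiv.Perm.mul_apply]
      exact h.symm
    have hπ1N : π1 ∈ N := by
      rw [hπ1]
      exact hN.conj_mem π2 hπ2 σ
    exact ⟨hα, hβ, hH, a1, b1, π1, u1, u2, u3, hπ1N⟩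

theorem nu_compatibility' (n q : ℕ)
    (N : Subgroup (Equiv.Perm (Fin q))) (hN : N.Normal)
    (α β : PM n) (hα : rnk α = q) (hβ : rnk β = q)
    (hH : greenH (pmul (n := n)) α β) (γ : PM n) :
    ((rnk (pmul α γ) = q ↔ rnk (pmul β γ) = q) ∧
      (rnk (pmul α γ) = q →
        (nuRel q N α β ↔ nuRel q N (pmul α γ) (pmul β γ)))) ∧
    ((rnk (pmul γ α) = q ↔ rnk (pmul γ β) = q) ∧
      (rnk (pmul γ α) = q →
        (nuRel q N α β ↔ nuRel q N (pmul γ α) (pmul γ β)))) := by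
  refine ⟨main_right N hN hα hβ hH, ?_⟩
  have hαf : rnk (flipP α) = q := (rnk_flip α).trans hα
  have hβf : rnk (flipP β) = q := (rnk_flip β).trans hβ
  have hHf := greenH_flip hH
  have mr := main_right (γ := flipP γ) N hN hαf hβf hHf
  have e1 : pmul (flipP α) (flipP γ) = flipP (pmul γ α) := pmul_flip γ α
  have e2 : pmul (flipP β) (flipP γ) = flipP (pmul γ β) := pmul_flip γ β
  have r1 : rnk (pmul (flipP α) (flipP γ)) = rnk (pmul γ α) := by rw [e1, rnk_flip]
  have r2 : rnk (pmul (flipP β) (flipP γ)) = rnk (pmul γ β) := by rw [e2, rnk_flip]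
  constructor
  · rw [← r1, ← r2]; exact mr.1
  · intro h1
    have h1' : rnk (pmul (flipP α) (flipP γ)) = q := by rw [r1]; exact h1
    have inner := mr.2 h1'
    calc nuRel q N α β ↔ nuRel q N (flipP α) (flipP β) := nuRel_flip_iff
      _ ↔ nuRel q N (pmul (flipP α) (flipP γ)) (pmul (flipP β) (flipP γ)) := inner
      _ ↔ nuRel q N (flipP (pmul γ α)) (flipP (pmul γ β)) := by rw [e1, e2]
      _ ↔ nuRel q N (pmul γ α) (pmul γ β) := nuRel_flip_iff.symm


end Proofs12

/-- For `2 ≤ q ≤ n`, `N ⊴ S_q`, H-related `α, β ∈ D_q` and `γ ∈ P_n`: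
`αγ ∈ D_q ↔ βγ ∈ D_q`, in which case `(α,β) ∈ ν_N ↔ (αγ,βγ) ∈ ν_N`; and dually on the
left. -/
theorem nu_compatibility (n q : ℕ) (hq : 2 ≤ q) (hqn : q ≤ n)
    (N : Subgroup (Equiv.Perm (Fin q))) (hN : N.Normal)
    (α β : PM n) (hα : rnk α = q) (hβ : rnk β = q)
    (hH : greenH (pmul (n := n)) α β) (γ : PM n) :
    ((rnk (pmul α γ) = q ↔ rnk (pmul β γ) = q) ∧
      (rnk (pmul α γ) = q →
        (nuRel q N α β ↔ nuRel q N (pmul α γ) (pmul β γ)))) ∧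
    ((rnk (pmul γ α) = q ↔ rnk (pmul γ β) = q) ∧
      (rnk (pmul γ α) = q →
        (nuRel q N α β ↔ nuRel q N (pmul γ α) (pmul γ β)))) := by
  exact nu_compatibility' n q N hN α β hα hβ hH γ

end TPM
end
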